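/- arXiv:1501.06318 — 2 statements merged into one kernel-verified Lean document; each statement's English description precedes it below -/
import Mathlib

section
/- Let U ∈ ℝ^{d×k} be a matrix with orthonormal columns u_1,…,u_k (UᵀU = I_k), let Λ_1,…,Λ_L ∈ ℝ^{k×k} be diagonal matrices with diagonal entries λ_{1l},…,λ_{kl} for l = 1,…,L, let R_1,…,R_L ∈ ℝ^{d×d} be symmetric matrices with Frobenius norm at most 1, and for ε > 0 set M_l(ε) = U Λ_l Uᵀ + ε R_l. Let Ū ∈ O(d) be an orthogonal extension of U with columns u_1,…,u_d, and define λ_{il} = 0 for k < i ≤ d. Define E ∈ ℝ^{d×k} by E_{ij} = (Σ_{l=1}^L (λ_{il} − λ_{jl}) u_jᵀ R_l u_i) / (Σ_{l=1}^L (λ_{il} − λ_{jl})²) for i ≠ j (assuming each such denominator is nonzero), and E_{jj} = 0. Suppose that for each ε > 0, Ũ(ε) ∈ O(d) is a global minimizer over the orthogonal group O(d) of the joint diagonalization objective F(V, ε) = Σ_{l=1}^L Σ_{i≠j} (Vᵀ M_l(ε) V)_{ij}². Then for every j ∈ {1,…,k}, limsup_{ε→0⁺} (1/ε) · min_{i∈{1,…,d},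 s∈{−1,1}} ‖s·ũ_i(ε) − u_j‖₂ ≤ √(Σ_{i=1}^d E_{ij}²), where ũ_1(ε),…,ũ_d(ε) denote the columns of Ũ(ε). (That is, ‖ũ_j − u_j‖₂ ≤ ε √(Σ_{i=1}^d E_{ij}²) + o(ε) for some column ũ_j of the minimizer, up to sign.) -/
open Filter Matrix Finset

set_option maxHeartbeats 1000000

section Prelim
variable {d : ℕ}

/-- off-diagonal sum rewriting -/
lemma offdiag_eq (f : Fin d → Fin d → ℝ) :
    ∑ i, ∑ j, (if i = j then 0 else f i j) = (∑ i, ∑ j, f i j) - ∑ i, f i i := by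
  rw [← Finset.sum_sub_distrib]
  refine Finset.sum_congr rfl fun i _ => ?_
  have : ∀ j : Fin d, (if i = j then 0 else f i j) = f i j - (if j = i then f i i else 0) := by
    intro j
    by_cases h : i = j
    · subst h; simp
    · have h' : ¬ j = i := fun hh => h hh.symm
      simp [h, h']
  rw [Finset.sum_congr rfl fun j _ => this j, Finset.sum_sub_distrib,
    Finset.sum_ite_eq' Finset.univ i (fun _ => f i i)]
  simp

/-- isometry: if `G * Gᵀ = 1` then `x ↦ Gᵀ x` preserves sums of squares. -/
lemma iso_sum_sq (G : Matrix (Fin d) (Fin d) ℝ) (hG : G * Gᵀ = 1) (x : Fin d → ℝ) :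
    ∑ i, (∑ r, G r i * x r) ^ 2 = ∑ r, (x r) ^ 2 := by
  have expand : ∀ i : Fin d, (∑ r, G r i * x r) ^ 2
      = ∑ r, ∑ s, G r i * x r * (G s i * x s) := by
    intro i
    rw [sq, Finset.sum_mul_sum]
  calc ∑ i, (∑ r, G r i * x r) ^ 2
      = ∑ i, ∑ r, ∑ s, G r i * x r * (G s i * x s) := by
        exact Finset.sum_congr rfl fun i _ => expand i
    _ = ∑ r, ∑ s, (∑ i, G r i * G s i) * (x r * x s) := by
        rw [Finset.sum_comm]
        refine Finset.sum_congr rfl fun r _ => ?_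
        rw [Finset.sum_comm]
        refine Finset.sum_congr rfl fun s _ => ?_
        rw [Finset.sum_mul]
        exact Finset.sum_congr rfl fun i _ => by ring
    _ = ∑ r, ∑ s, ((1 : Matrix (Fin d) (Fin d) ℝ) r s) * (x r * x s) := by
        refine Finset.sum_congr rfl fun r _ => Finset.sum_congr rfl fun s _ => ?_
        congr 1
        rw [← hG, Matrix.mul_apply]
        exact Finset.sum_congr rfl fun i _ => by rw [Matrix.transpose_apply]
    _ = ∑ r, (x r) ^ 2 := by
        refine Finset.sum_congr rfl fun r _ => ?_
        rw [Finset.sum_congr rfl (fun s _ => by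
          rw [Matrix.one_apply] : ∀ s ∈ Finset.univ,
            ((1 : Matrix (Fin d) (Fin d) ℝ) r s) * (x r * x s)
            = (if r = s then 1 else 0) * (x r * x s))]
        have : ∀ s : Fin d, (if r = s then (1:ℝ) else 0) * (x r * x s)
            = if s = r then x r * x r else 0 := by
          intro s; by_cases h : r = s <;> simp [h, eq_comm]
        rw [Finset.sum_congr rfl fun s _ => this s, Finset.sum_ite_eq' Finset.univ r]
        simp [sq]

/-- Frobenius norm invariance under orthogonal conjugation. -/
lemma frob_conj (G C : Matrix (Fin d) (Fin d) ℝ) (hG : Gᵀ * G = 1) :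
    ∑ i, ∑ j, ((Gᵀ * C * G) i j) ^ 2 = ∑ i, ∑ j, (C i j) ^ 2 := by
  have hG' : G * Gᵀ = 1 := mul_eq_one_comm.mp hG
  have h1 : ∀ j, ∑ i, ((Gᵀ * C * G) i j) ^ 2 = ∑ r, ((C * G) r j) ^ 2 := by
    intro j
    have : ∀ i, (Gᵀ * C * G) i j = ∑ r, G r i * (C * G) r j := by
      intro i
      rw [Matrix.mul_assoc, Matrix.mul_apply]
      exact Finset.sum_congr rfl fun r _ => by rw [Matrix.transpose_apply]
    rw [Finset.sum_congr rfl fun i _ => by rw [this i]]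
    exact iso_sum_sq G hG' _
  have h2 : ∀ r, ∑ j, ((C * G) r j) ^ 2 = ∑ s, (C r s) ^ 2 := by
    intro r
    have : ∀ j, (C * G) r j = ∑ s, G s j * C r s := by
      intro j
      rw [Matrix.mul_apply]
      exact Finset.sum_congr rfl fun s _ => by ring
    rw [Finset.sum_congr rfl fun jj _ => by rw [this jj]]
    exact iso_sum_sq G hG' _
  calc ∑ i, ∑ j, ((Gᵀ * C * G) i j) ^ 2 = ∑ j, ∑ i, ((Gᵀ * C * G) i j) ^ 2 :=
        Finset.sum_comm
    _ = ∑ j, ∑ r, ((C * G) r j) ^ 2 := Finset.sum_congr rfl fun j _ => h1 j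
    _ = ∑ r, ∑ j, ((C * G) r j) ^ 2 := Finset.sum_comm
    _ = ∑ i, ∑ j, (C i j) ^ 2 := Finset.sum_congr rfl fun r _ => h2 r

/-- collapse a sum against a two-point-supported function -/
lemma sum_if2 {p q : Fin d} (hpq : p ≠ q) (a b : ℝ) (h : Fin d → ℝ) :
    ∑ r, (if r = p then a else if r = q then b else 0) * h r = a * h p + b * h q := by
  have : ∀ r : Fin d, (if r = p then a else if r = q then b else 0) * h r
      = (if r = p then a * h p else 0) + (if r = q then b * h q else 0) := by
    intro r
    by_cases h1 : r = p
    · subst h1; simp [hpq]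
    · by_cases h2 : r = q
      · subst h2; simp [h1, fun hh : r = p => hpq hh.symm, (Ne.symm hpq)]
      · simp [h1, h2]
  rw [Finset.sum_congr rfl fun r _ => this r, Finset.sum_add_distrib,
    Finset.sum_ite_eq' Finset.univ p, Finset.sum_ite_eq' Finset.univ q]
  simp

lemma sum_if1 (i : Fin d) (h : Fin d → ℝ) :
    ∑ r, (if r = i then (1:ℝ) else 0) * h r = h i := by
  have : ∀ r : Fin d, (if r = i then (1:ℝ) else 0) * h r
      = if r = i then h i else 0 := by
    intro r; by_cases hr : r = i <;> simp [hr]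
  rw [Finset.sum_congr rfl fun r _ => this r, Finset.sum_ite_eq' Finset.univ i]
  simp

end Prelim

lemma givens_identity (co t a b x : ℝ) (hco2 : co ^ 2 = 1 - t ^ 2) :
    (co ^ 2 * a + 2 * co * t * x + t ^ 2 * b) ^ 2
      + (t ^ 2 * a - 2 * co * t * x + co ^ 2 * b) ^ 2 - a ^ 2 - b ^ 2
    = t * (2 * t * (t * (a - b) - 2 * co * x) ^ 2
        - 2 * (a - b) * (t * (a - b) - 2 * co * x)) := by
  linear_combination (a ^ 2 + b ^ 2 - t ^ 2 * a ^ 2 + 4 * t ^ 2 * a * b - t ^ 2 * b ^ 2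
    + 4 * co * t * a * x - 4 * co * t * b * x + co ^ 2 * a ^ 2 + co ^ 2 * b ^ 2) * hco2

section Stat
variable {d L : ℕ}

lemma stationarity (C : Fin L → Matrix (Fin d) (Fin d) ℝ)
    (hsymm : ∀ l, (C l)ᵀ = C l)
    (hmin : ∀ G : Matrix (Fin d) (Fin d) ℝ, Gᵀ * G = 1 →
      (∑ l, ∑ i, ∑ j, if i = j then 0 else (C l i j) ^ 2) ≤
      (∑ l, ∑ i, ∑ j, if i = j then 0 else ((Gᵀ * C l * G) i j) ^ 2))
    (p q : Fin d) (hpq : p ≠ q) :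
    (∑ l, C l p q * (C l p p - C l q q)) = 0 := by
  have hsym' : ∀ l, C l q p = C l p q := by
    intro l
    have := congrFun (congrFun (hsymm l) q) p
    rw [Matrix.transpose_apply] at this
    exact this.symm
  set g : ℝ → ℝ := fun t => ∑ l,
      (2 * t * (t * (C l p p - C l q q) - 2 * Real.sqrt (1 - t ^ 2) * C l p q) ^ 2
        - 2 * (C l p p - C l q q)
          * (t * (C l p p - C l q q) - 2 * Real.sqrt (1 - t ^ 2) * C l p q)) with hg
  have key : ∀ t : ℝ, t ^ 2 ≤ 1 → t * g t ≤ 0 := by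
    intro t ht
    set co := Real.sqrt (1 - t ^ 2) with hco
    have hco2 : co ^ 2 = 1 - t ^ 2 := Real.sq_sqrt (by linarith)
    set G : Matrix (Fin d) (Fin d) ℝ := Matrix.of (fun r i =>
      if r = p then (if i = p then co else if i = q then -t else 0)
      else if r = q then (if i = p then t else if i = q then co else 0)
      else (if r = i then 1 else 0)) with hGdef
    have gcolp : ∀ r, G r p = if r = p then co else if r = q then t else 0 := by
      intro r
      simp only [hGdef, Matrix.of_apply]
      by_cases h1 : r = p
      · simp [h1, hpq, Ne.symm hpq]
      · by_cases h2 : r = q <;> simp [h1, h2, hpq, Ne.symm hpq]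
    have gcolq : ∀ r, G r q = if r = p then -t else if r = q then co else 0 := by
      intro r
      simp only [hGdef, Matrix.of_apply]
      by_cases h1 : r = p
      · simp [h1, hpq, Ne.symm hpq]
      · by_cases h2 : r = q <;> simp [h1, h2, hpq, Ne.symm hpq]
    have gcoli : ∀ i, i ≠ p → i ≠ q → ∀ r, G r i = if r = i then 1 else 0 := by
      intro i hip hiq r
      simp only [hGdef, Matrix.of_apply]
      by_cases h1 : r = p
      · simp [h1, hip, hiq, Ne.symm hip, Ne.symm hiq, hpq, Ne.symm hpq]
      · by_cases h2 : r = q <;>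
          simp [h1, h2, hip, hiq, Ne.symm hip, Ne.symm hiq, hpq, Ne.symm hpq]
    have Gpp : G p p = co := by rw [gcolp p]; simp
    have Gqp : G q p = t := by rw [gcolp q]; simp [Ne.symm hpq]
    have Gpq : G p q = -t := by rw [gcolq p]; simp
    have Gqq : G q q = co := by rw [gcolq q]; simp [Ne.symm hpq]
    have Gpj : ∀ jj, jj ≠ p → jj ≠ q → G p jj = 0 := by
      intro jj h1 h2
      rw [gcoli jj h1 h2, if_neg (show ¬ p = jj from fun h => h1 h.symm)]
    have Gqj : ∀ jj, jj ≠ p → jj ≠ q → G q jj = 0 := by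
      intro jj h1 h2
      rw [gcoli jj h1 h2, if_neg (show ¬ q = jj from fun h => h2 h.symm)]
    have hGo : Gᵀ * G = 1 := by
      ext i jj
      rw [Matrix.mul_apply]
      have htr : ∀ r, Gᵀ i r * G r jj = G r i * G r jj := fun r => by
        rw [Matrix.transpose_apply]
      rw [Finset.sum_congr rfl fun r _ => htr r]
      by_cases hip : i = p
      · rw [hip, Finset.sum_congr rfl fun r _ => by rw [gcolp r], sum_if2 hpq]
        by_cases hjp : jj = p
        · rw [hjp, Gpp, Gqp, Matrix.one_apply_eq]
          nlinarith [hco2]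
        · by_cases hjq : jj = q
          · rw [hjq, Gpq, Gqq, Matrix.one_apply_ne hpq]
            ring
          · rw [Gpj jj hjp hjq, Gqj jj hjp hjq,
              Matrix.one_apply_ne (show p ≠ jj from fun h => hjp h.symm)]
            ring
      · by_cases hiq : i = q
        · rw [hiq, Finset.sum_congr rfl fun r _ => by rw [gcolq r], sum_if2 hpq]
          by_cases hjp : jj = p
          · rw [hjp, Gpp, Gqp, Matrix.one_apply_ne (Ne.symm hpq)]
            ring
          · by_cases hjq : jj = q
            · rw [hjq, Gpq, Gqq, Matrix.one_apply_eq]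
              nlinarith [hco2]
            · rw [Gpj jj hjp hjq, Gqj jj hjp hjq,
                Matrix.one_apply_ne (show q ≠ jj from fun h => hjq h.symm)]
              ring
        · rw [Finset.sum_congr rfl fun r _ => by rw [gcoli i hip hiq r], sum_if1]
          by_cases hjp : jj = p
          · rw [hjp, gcolp, Matrix.one_apply_ne hip]
            simp [hip, hiq]
          · by_cases hjq : jj = q
            · rw [hjq, gcolq, Matrix.one_apply_ne hiq]
              simp [hip, hiq]
            · rw [gcoli jj hjp hjq]
              simp [Matrix.one_apply]
    have entry : ∀ (l : Fin L) (i jj : Fin d),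
        (Gᵀ * C l * G) i jj = ∑ r, G r i * (∑ s, G s jj * C l r s) := by
      intro l i jj
      rw [Matrix.mul_assoc, Matrix.mul_apply]
      refine Finset.sum_congr rfl fun r _ => ?_
      rw [Matrix.transpose_apply, Matrix.mul_apply]
      congr 1
      exact Finset.sum_congr rfl fun s _ => by ring
    have hNpp : ∀ l, (Gᵀ * C l * G) p p
        = co ^ 2 * C l p p + 2 * co * t * C l p q + t ^ 2 * C l q q := by
      intro l
      rw [entry]
      have inner : ∀ r, (∑ s, G s p * C l r s) = co * C l r p + t * C l r q := by
        intro r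
        rw [Finset.sum_congr rfl fun s _ => by rw [gcolp s], sum_if2 hpq]
      rw [Finset.sum_congr rfl fun r _ => by rw [gcolp r, inner r], sum_if2 hpq,
        hsym' l]
      ring
    have hNqq : ∀ l, (Gᵀ * C l * G) q q
        = t ^ 2 * C l p p - 2 * co * t * C l p q + co ^ 2 * C l q q := by
      intro l
      rw [entry]
      have inner : ∀ r, (∑ s, G s q * C l r s) = -t * C l r p + co * C l r q := by
        intro r
        rw [Finset.sum_congr rfl fun s _ => by rw [gcolq s], sum_if2 hpq]
      rw [Finset.sum_congr rfl fun r _ => by rw [gcolq r, inner r], sum_if2 hpq,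
        hsym' l]
      ring
    have hNii : ∀ l, ∀ i, i ≠ p → i ≠ q → (Gᵀ * C l * G) i i = C l i i := by
      intro l i hip hiq
      rw [entry]
      have inner : ∀ r, (∑ s, G s i * C l r s) = C l r i := by
        intro r
        rw [Finset.sum_congr rfl fun s _ => by rw [gcoli i hip hiq s], sum_if1]
      rw [Finset.sum_congr rfl fun r _ => by rw [gcoli i hip hiq r, inner r], sum_if1]
    have hm := hmin G hGo
    have hrw : ∀ l, (∑ i, ∑ jj, if i = jj then 0 else ((Gᵀ * C l * G) i jj) ^ 2)
        - (∑ i, ∑ jj, if i = jj then 0 else (C l i jj) ^ 2)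
        = (∑ i, (C l i i) ^ 2) - (∑ i, ((Gᵀ * C l * G) i i) ^ 2) := by
      intro l
      rw [offdiag_eq, offdiag_eq, frob_conj _ _ hGo]
      ring
    have hdiagdiff : ∀ l, (∑ i, (C l i i) ^ 2) - (∑ i, ((Gᵀ * C l * G) i i) ^ 2)
        = (C l p p) ^ 2 + (C l q q) ^ 2
          - ((Gᵀ * C l * G) p p) ^ 2 - ((Gᵀ * C l * G) q q) ^ 2 := by
      intro l
      have hsub : ∑ i, ((C l i i) ^ 2 - ((Gᵀ * C l * G) i i) ^ 2)
          = ∑ i ∈ ({p, q} : Finset (Fin d)),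
            ((C l i i) ^ 2 - ((Gᵀ * C l * G) i i) ^ 2) := by
        symm
        refine Finset.sum_subset (Finset.subset_univ _) ?_
        intro i _ hi
        simp only [Finset.mem_insert, Finset.mem_singleton] at hi
        push_neg at hi
        rw [hNii l i hi.1 hi.2]
        ring
      have hp2 := Finset.sum_pair
        (f := fun i => (C l i i) ^ 2 - ((Gᵀ * C l * G) i i) ^ 2) hpq
      rw [Finset.sum_sub_distrib] at hsub
      rw [hsub, hp2]
      ring
    have hfinal : ∑ l, (((Gᵀ * C l * G) p p) ^ 2 + ((Gᵀ * C l * G) q q) ^ 2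
        - (C l p p) ^ 2 - (C l q q) ^ 2) ≤ 0 := by
      have h1 : 0 ≤ ∑ l, ((∑ i, ∑ jj, if i = jj then 0 else ((Gᵀ * C l * G) i jj) ^ 2)
          - (∑ i, ∑ jj, if i = jj then 0 else (C l i jj) ^ 2)) := by
        rw [Finset.sum_sub_distrib]
        linarith [hm]
      rw [Finset.sum_congr rfl fun l _ => (hrw l).trans (hdiagdiff l)] at h1
      have h2 : ∑ l, (((Gᵀ * C l * G) p p) ^ 2 + ((Gᵀ * C l * G) q q) ^ 2
          - (C l p p) ^ 2 - (C l q q) ^ 2)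
          = - ∑ l, ((C l p p) ^ 2 + (C l q q) ^ 2
          - ((Gᵀ * C l * G) p p) ^ 2 - ((Gᵀ * C l * G) q q) ^ 2) := by
        rw [← Finset.sum_neg_distrib]
        exact Finset.sum_congr rfl fun l _ => by ring
      rw [h2]
      linarith
    have hident : ∑ l, (((Gᵀ * C l * G) p p) ^ 2 + ((Gᵀ * C l * G) q q) ^ 2
        - (C l p p) ^ 2 - (C l q q) ^ 2) = t * g t := by
      rw [hg]
      simp only
      rw [Finset.mul_sum]
      refine Finset.sum_congr rfl fun l _ => ?_
      rw [hNpp l, hNqq l, ← hco]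
      exact givens_identity co t (C l p p) (C l q q) (C l p q) hco2
    rw [← hident]
    exact hfinal
  have hgcont : Continuous g := by
    rw [hg]
    refine continuous_finset_sum _ fun l _ => ?_
    have hsq : Continuous fun t : ℝ => Real.sqrt (1 - t ^ 2) :=
      Real.continuous_sqrt.comp (by continuity)
    have h1 : Continuous fun t : ℝ =>
        t * (C l p p - C l q q) - 2 * Real.sqrt (1 - t ^ 2) * C l p q :=
      (continuous_id.mul continuous_const).sub
        ((continuous_const.mul hsq).mul continuous_const)
    exact ((continuous_const.mul continuous_id).mul (h1.pow 2)).sub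
      (continuous_const.mul h1)
  have hg0 : g 0 = 4 * ∑ l, ((C l p p - C l q q) * C l p q) := by
    rw [hg]
    simp only
    rw [Finset.mul_sum]
    refine Finset.sum_congr rfl fun l _ => ?_
    norm_num [Real.sqrt_one]
    ring
  have hpos : ∀ t ∈ Set.Ioo (0:ℝ) 1, g t ≤ 0 := by
    intro t ht
    have h1 : t ^ 2 ≤ 1 := by nlinarith [ht.1, ht.2]
    have h2 := key t h1
    nlinarith [ht.1]
  have hneg : ∀ t ∈ Set.Ioo (-1:ℝ) 0, 0 ≤ g t := by
    intro t ht
    have h1 : t ^ 2 ≤ 1 := by nlinarith [ht.1, ht.2]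
    have h2 := key t h1
    nlinarith [ht.2]
  have hle : g 0 ≤ 0 := by
    have htend : Tendsto g (nhdsWithin 0 (Set.Ioi 0)) (nhds (g 0)) :=
      (hgcont.tendsto 0).mono_left nhdsWithin_le_nhds
    refine le_of_tendsto htend ?_
    filter_upwards [Ioo_mem_nhdsGT_of_mem (by norm_num : (0:ℝ) ∈ Set.Ico (0:ℝ) 1)]
      with t ht using hpos t ht
  have hge : 0 ≤ g 0 := by
    have htend : Tendsto g (nhdsWithin 0 (Set.Iio 0)) (nhds (g 0)) :=
      (hgcont.tendsto 0).mono_left nhdsWithin_le_nhds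
    refine ge_of_tendsto htend ?_
    filter_upwards [Ioo_mem_nhdsLT_of_mem (by norm_num : (0:ℝ) ∈ Set.Ioc (-1:ℝ) 0)]
      with t ht using hneg t ht
  have h0 : g 0 = 0 := le_antisymm hle hge
  rw [hg0] at h0
  have hsum : ∑ l, ((C l p p - C l q q) * C l p q) = 0 := by linarith
  rw [← hsum]
  exact Finset.sum_congr rfl fun l _ => by ring

end Stat


section Helpers
variable {d : ℕ}

lemma col_sq {A : Matrix (Fin d) (Fin d) ℝ} (hA : Aᵀ * A = 1) (i : Fin d) :
    ∑ r, (A r i) ^ 2 = 1 := by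
  have h := congrFun (congrFun hA i) i
  rw [Matrix.mul_apply] at h
  have h2 : ∀ r, Aᵀ i r * A r i = (A r i) ^ 2 := fun r => by
    rw [Matrix.transpose_apply]; ring
  rw [Finset.sum_congr rfl fun r _ => h2 r] at h
  rw [h, Matrix.one_apply_eq]

lemma row_sq {A : Matrix (Fin d) (Fin d) ℝ} (hA : Aᵀ * A = 1) (r : Fin d) :
    ∑ i, (A r i) ^ 2 = 1 := by
  have hA' : A * Aᵀ = 1 := mul_eq_one_comm.mp hA
  have h := congrFun (congrFun hA' r) r
  rw [Matrix.mul_apply] at h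
  have h2 : ∀ i, A r i * Aᵀ i r = (A r i) ^ 2 := fun i => by
    rw [Matrix.transpose_apply]; ring
  rw [Finset.sum_congr rfl fun i _ => h2 i] at h
  rw [h, Matrix.one_apply_eq]

lemma entry_sq_le {A : Matrix (Fin d) (Fin d) ℝ} (hA : Aᵀ * A = 1) (r i : Fin d) :
    (A r i) ^ 2 ≤ 1 := by
  calc (A r i) ^ 2 ≤ ∑ r', (A r' i) ^ 2 :=
        Finset.single_le_sum (f := fun r' => (A r' i) ^ 2)
          (fun a _ => sq_nonneg _) (Finset.mem_univ r)
    _ = 1 := col_sq hA i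

lemma sum_mul_boole' (j : Fin d) (h : Fin d → ℝ) :
    ∑ a, h a * (if a = j then (1:ℝ) else 0) = h j := by
  have : ∀ a : Fin d, h a * (if a = j then (1:ℝ) else 0) = if a = j then h j else 0 := by
    intro a; by_cases ha : a = j <;> simp [ha]
  rw [Finset.sum_congr rfl fun a _ => this a, Finset.sum_ite_eq' Finset.univ j]
  simp

lemma entry_tendsto {X : ℕ → Matrix (Fin d) (Fin d) ℝ} {A : Matrix (Fin d) (Fin d) ℝ}
    (h : Tendsto X atTop (nhds A)) (p r : Fin d) :
    Tendsto (fun n => X n p r) atTop (nhds (A p r)) := by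
  have h1 : Tendsto (fun n => X n p) atTop (nhds (A p)) := (tendsto_pi_nhds.mp h) p
  exact (tendsto_pi_nhds.mp h1) r

lemma matrix_compact : IsCompact {A : Matrix (Fin d) (Fin d) ℝ |
    ∀ r i, A r i ∈ Set.Icc (-1:ℝ) 1} := by
  have : {A : Matrix (Fin d) (Fin d) ℝ | ∀ r i, A r i ∈ Set.Icc (-1:ℝ) 1}
      = Set.pi Set.univ (fun _ : Fin d =>
          Set.pi Set.univ (fun _ : Fin d => Set.Icc (-1:ℝ) 1)) := by
    ext A
    constructor
    · intro h
      exact Set.mem_univ_pi.mpr fun r => Set.mem_univ_pi.mpr fun i => h r i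
    · intro h r i
      exact Set.mem_univ_pi.mp (Set.mem_univ_pi.mp h r) i
  rw [this]
  exact isCompact_univ_pi fun _ => isCompact_univ_pi fun _ => isCompact_Icc

lemma vec_compact : IsCompact {v : Fin d → ℝ | ∀ i, v i ∈ Set.Icc (-1:ℝ) 1} := by
  have : {v : Fin d → ℝ | ∀ i, v i ∈ Set.Icc (-1:ℝ) 1}
      = Set.pi Set.univ (fun _ : Fin d => Set.Icc (-1:ℝ) 1) := by
    ext v
    simp only [Set.mem_setOf_eq, Set.mem_pi, Set.mem_univ, true_implies]
  rw [this]
  exact isCompact_univ_pi fun _ => isCompact_Icc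

end Helpers

/-- first-order perturbation bound (Cardoso) for the global minimizer
of the orthogonal joint diagonalization objective, in the low-rank setting.
`Ubar` is the orthogonal extension `Ū ∈ O(d)` of `U ∈ ℝ^{d×k}` (its first `k`
columns are `u_1, …, u_k`), and `lam i l = λ_{il}` with `λ_{il} = 0` for `i > k`,
so that `M_l(ε) = U Λ_l Uᵀ + ε R_l = Ū Λ̄_l Ūᵀ + ε R_l`. -/
theorem stmt_0 {d k L : ℕ} (hL : 1 ≤ L) (hk : k ≤ d)
    (Ubar : Matrix (Fin d) (Fin d) ℝ) (hUbar : Ubarᵀ * Ubar = 1)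
    (lam : Fin d → Fin L → ℝ)
    (hlam : ∀ (i : Fin d) (l : Fin L), k ≤ (i : ℕ) → lam i l = 0)
    (R : Fin L → Matrix (Fin d) (Fin d) ℝ)
    (hRsymm : ∀ l, (R l)ᵀ = R l)
    (hRnorm : ∀ l, Real.sqrt (∑ i, ∑ j, (R l i j) ^ 2) ≤ 1)
    (M : ℝ → Fin L → Matrix (Fin d) (Fin d) ℝ)
    (hM : ∀ (ε : ℝ) (l : Fin L),
      M ε l = Ubar * Matrix.diagonal (fun i => lam i l) * Ubarᵀ + ε • R l)
    (hdenom : ∀ i j : Fin d, i ≠ j → (j : ℕ) < k →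
      (∑ l, (lam i l - lam j l) ^ 2) ≠ 0)
    (E : Fin d → Fin d → ℝ)
    (hE : ∀ i j : Fin d, i ≠ j → (j : ℕ) < k →
      E i j = (∑ l, (lam i l - lam j l) * (∑ a, ∑ b, Ubar a j * R l a b * Ubar b i)) /
        (∑ l, (lam i l - lam j l) ^ 2))
    (hEdiag : ∀ j : Fin d, E j j = 0)
    (Ut : ℝ → Matrix (Fin d) (Fin d) ℝ)
    (hUt : ∀ ε : ℝ, 0 < ε →
      (Ut ε)ᵀ * Ut ε = 1 ∧
      ∀ V : Matrix (Fin d) (Fin d) ℝ, Vᵀ * V = 1 →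
        (∑ l, ∑ i, ∑ j, if i = j then 0 else (((Ut ε)ᵀ * M ε l * Ut ε) i j) ^ 2) ≤
        (∑ l, ∑ i, ∑ j, if i = j then 0 else ((Vᵀ * M ε l * V) i j) ^ 2)) :
    ∀ j : Fin d, (j : ℕ) < k →
      Filter.limsup
        (fun ε : ℝ => (1 / ε) *
          ⨅ (i : Fin d) (s : Bool),
            Real.sqrt (∑ r, ((if s then (1 : ℝ) else -1) * Ut ε r i - Ubar r j) ^ 2))
        (nhdsWithin 0 (Set.Ioi 0))
      ≤ Real.sqrt (∑ i, E i j ^ 2) := by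
  intro j hj
  classical
  set c : ℝ := Real.sqrt (∑ i, E i j ^ 2) with hc
  have hc0 : 0 ≤ c := Real.sqrt_nonneg _
  set f : ℝ → ℝ := fun ε => (1 / ε) *
      ⨅ (i : Fin d) (s : Bool),
        Real.sqrt (∑ r, ((if s then (1 : ℝ) else -1) * Ut ε r i - Ubar r j) ^ 2) with hf
  have hfnn : ∀ ε : ℝ, 0 < ε → 0 ≤ f ε := by
    intro ε hε
    apply mul_nonneg (by positivity)
    exact Real.iInf_nonneg fun i => Real.iInf_nonneg fun s => Real.sqrt_nonneg _
  have key : ∀ δ : ℝ, 0 < δ →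
      ∀ᶠ ε in nhdsWithin (0:ℝ) (Set.Ioi 0), f ε ≤ c + δ := by
    intro δ hδ
    by_contra hcon
    rw [Filter.not_eventually] at hcon
    obtain ⟨u0, hu0, hu0f⟩ := Filter.frequently_iff_seq_forall.mp hcon
    obtain ⟨N, hN⟩ := Filter.eventually_atTop.mp
      (hu0.eventually (eventually_mem_nhdsWithin (s := Set.Ioi (0:ℝ))))
    set u : ℕ → ℝ := fun n => u0 (n + N) with hudef
    have hupos : ∀ n, 0 < u n := fun n => hN (n + N) (Nat.le_add_left _ _)
    have hut : Tendsto u atTop (nhdsWithin 0 (Set.Ioi 0)) :=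
      hu0.comp (tendsto_add_atTop_nat N)
    have huf : ∀ n, ¬ f (u n) ≤ c + δ := fun n => hu0f (n + N)
    have hUbar' : Ubar * Ubarᵀ = 1 := mul_eq_one_comm.mp hUbar
    set W0 : ℕ → Matrix (Fin d) (Fin d) ℝ := fun n => Ubarᵀ * Ut (u n) with hW0
    have hOW0 : ∀ n, (W0 n)ᵀ * W0 n = 1 := by
      intro n
      have h1 := (hUt (u n) (hupos n)).1
      show (Ubarᵀ * Ut (u n))ᵀ * (Ubarᵀ * Ut (u n)) = 1
      rw [Matrix.transpose_mul, Matrix.transpose_transpose]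
      simp only [Matrix.mul_assoc]
      rw [← Matrix.mul_assoc Ubar Ubarᵀ _, hUbar', Matrix.one_mul, h1]
    have hW0K : ∀ n, W0 n ∈ {A : Matrix (Fin d) (Fin d) ℝ |
        ∀ r i, A r i ∈ Set.Icc (-1:ℝ) 1} := by
      intro n r i
      have := entry_sq_le (hOW0 n) r i
      constructor <;> nlinarith
    haveI : FirstCountableTopology (Matrix (Fin d) (Fin d) ℝ) :=
      inferInstanceAs (FirstCountableTopology (Fin d → Fin d → ℝ))
    obtain ⟨P, hPK, φ, hφ, hWconv⟩ := matrix_compact.tendsto_subseq hW0K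
    set e : ℕ → ℝ := fun n => u (φ n) with hedef
    set Wn : ℕ → Matrix (Fin d) (Fin d) ℝ := fun n => W0 (φ n) with hWndef
    have hW : Tendsto Wn atTop (nhds P) := hWconv
    have hepos : ∀ n, 0 < e n := fun n => hupos (φ n)
    have he : Tendsto e atTop (nhdsWithin 0 (Set.Ioi 0)) := hut.comp hφ.tendsto_atTop
    have he0 : Tendsto e atTop (nhds 0) := he.mono_right nhdsWithin_le_nhds
    have hef : ∀ n, ¬ f (e n) ≤ c + δ := fun n => huf (φ n)
    have hOW : ∀ n, (Wn n)ᵀ * Wn n = 1 := fun n => hOW0 (φ n)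
    have hOW' : ∀ n, Wn n * (Wn n)ᵀ = 1 := fun n => mul_eq_one_comm.mp (hOW n)
    have hWe : ∀ r i, Tendsto (fun n => Wn n r i) atTop (nhds (P r i)) :=
      fun r i => entry_tendsto hW r i
    -- structural matrices
    set Dl : Fin L → Matrix (Fin d) (Fin d) ℝ :=
      fun l => Matrix.diagonal (fun i => lam i l) with hDl
    set Ss : Fin L → Matrix (Fin d) (Fin d) ℝ := fun l => Ubarᵀ * R l * Ubar with hSs
    have hcancelU : ∀ X : Matrix (Fin d) (Fin d) ℝ, Ubarᵀ * (Ubar * X) = X := by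
      intro X
      rw [← Matrix.mul_assoc, hUbar, Matrix.one_mul]
    have symm_conj : ∀ (Q A : Matrix (Fin d) (Fin d) ℝ), Aᵀ = A →
        (Qᵀ * A * Q)ᵀ = Qᵀ * A * Q := by
      intro Q A hA
      rw [Matrix.transpose_mul, Matrix.transpose_mul, Matrix.transpose_transpose,
        hA, Matrix.mul_assoc]
    have hDsym : ∀ l, (Dl l)ᵀ = Dl l := fun l =>
      Matrix.diagonal_transpose (fun i => lam i l)
    have hSsym : ∀ l, (Ss l)ᵀ = Ss l := fun l => symm_conj Ubar (R l) (hRsymm l)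
    have hSsyme : ∀ l a b, Ss l a b = Ss l b a := by
      intro l a b
      conv_lhs => rw [← hSsym l]
      rw [Matrix.transpose_apply]
    have hSfrob : ∀ l, ∑ a, ∑ b, (Ss l a b) ^ 2 ≤ 1 := by
      intro l
      have h1 : ∑ a, ∑ b, (Ss l a b) ^ 2 = ∑ a, ∑ b, (R l a b) ^ 2 :=
        frob_conj Ubar (R l) hUbar
      have h2 : (0:ℝ) ≤ ∑ a, ∑ b, (R l a b) ^ 2 :=
        Finset.sum_nonneg fun a _ => Finset.sum_nonneg fun b _ => sq_nonneg _
      have h3 := hRnorm l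
      rw [h1, ← Real.sq_sqrt h2]
      nlinarith [Real.sqrt_nonneg (∑ i, ∑ j', (R l i j') ^ 2)]
    set Bn : ℕ → Fin L → Matrix (Fin d) (Fin d) ℝ :=
      fun n l => (Wn n)ᵀ * Dl l * Wn n + (e n) • ((Wn n)ᵀ * Ss l * Wn n) with hBndef
    have hUtW : ∀ n, Ubar * Wn n = Ut (e n) := by
      intro n
      show Ubar * (Ubarᵀ * Ut (u (φ n))) = Ut (u (φ n))
      rw [← Matrix.mul_assoc, hUbar', Matrix.one_mul]
    have hBM : ∀ n l, (Ut (e n))ᵀ * M (e n) l * Ut (e n) = Bn n l := by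
      intro n l
      rw [hM, ← hUtW n, Matrix.transpose_mul]
      show (Wn n)ᵀ * Ubarᵀ * (Ubar * Dl l * Ubarᵀ + e n • R l) * (Ubar * Wn n) = _
      rw [Matrix.mul_add, Matrix.add_mul]
      congr 1
      · simp only [Matrix.mul_assoc]
        rw [hcancelU, hcancelU]
      · show (Wn n)ᵀ * Ubarᵀ * (e n • R l) * (Ubar * Wn n)
          = e n • ((Wn n)ᵀ * (Ubarᵀ * R l * Ubar) * Wn n)
        simp only [Matrix.mul_smul, Matrix.smul_mul, Matrix.mul_assoc]
    have hBsym : ∀ n l, (Bn n l)ᵀ = Bn n l := by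
      intro n l
      rw [hBndef]
      simp only
      rw [Matrix.transpose_add, Matrix.transpose_smul,
        symm_conj _ _ (hDsym l), symm_conj _ _ (hSsym l)]
    have hstat : ∀ n (p r : Fin d), p ≠ r →
        ∑ l, Bn n l p r * (Bn n l p p - Bn n l r r) = 0 := by
      intro n p r hpr
      refine stationarity (fun l => Bn n l) (fun l => hBsym n l) ?_ p r hpr
      intro G hG
      have h1 := (hUt (e n) (hepos n)).1
      have hUtG : (Ut (e n) * G)ᵀ * (Ut (e n) * G) = 1 := by
        rw [Matrix.transpose_mul]
        simp only [Matrix.mul_assoc]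
        rw [← Matrix.mul_assoc (Ut (e n))ᵀ (Ut (e n)) G, h1, Matrix.one_mul, hG]
      have h2 := (hUt (e n) (hepos n)).2 (Ut (e n) * G) hUtG
      have key3 : ∀ l, (Ut (e n) * G)ᵀ * M (e n) l * (Ut (e n) * G)
          = Gᵀ * Bn n l * G := by
        intro l
        rw [← hBM n l]
        simp only [Matrix.transpose_mul, Matrix.mul_assoc]
      simp only [show ∀ l, (Ut (e n))ᵀ * M (e n) l * Ut (e n) = Bn n l from hBM n,
        key3] at h2
      exact h2
    -- limit matrices
    set Yl : Fin L → Matrix (Fin d) (Fin d) ℝ := fun l => Pᵀ * Dl l * P with hYl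
    set Tl : Fin L → Matrix (Fin d) (Fin d) ℝ := fun l => Pᵀ * Ss l * P with hTl
    have hconj_cont : ∀ A : Matrix (Fin d) (Fin d) ℝ,
        Continuous fun Q : Matrix (Fin d) (Fin d) ℝ => Qᵀ * A * Q := by
      intro A
      exact ((continuous_id.matrix_transpose).matrix_mul continuous_const).matrix_mul
        continuous_id
    have hYconv : ∀ l, Tendsto (fun n => (Wn n)ᵀ * Dl l * Wn n) atTop (nhds (Yl l)) :=
      fun l => ((hconj_cont (Dl l)).tendsto P).comp hW
    have hTconv : ∀ l, Tendsto (fun n => (Wn n)ᵀ * Ss l * Wn n) atTop (nhds (Tl l)) :=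
      fun l => ((hconj_cont (Ss l)).tendsto P).comp hW
    have hBe : ∀ n l (a b : Fin d),
        Bn n l a b = ((Wn n)ᵀ * Dl l * Wn n) a b + e n * ((Wn n)ᵀ * Ss l * Wn n) a b := by
      intro n l a b
      rw [hBndef]
      simp only [Matrix.add_apply, Matrix.smul_apply, smul_eq_mul]
    have hBconv : ∀ l (a b : Fin d),
        Tendsto (fun n => Bn n l a b) atTop (nhds (Yl l a b)) := by
      intro l a b
      have h1 := entry_tendsto (hYconv l) a b
      have h2 := entry_tendsto (hTconv l) a b
      have h3 : Tendsto (fun n => e n * ((Wn n)ᵀ * Ss l * Wn n) a b) atTop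
          (nhds (0 * Tl l a b)) := he0.mul h2
      have h4 := h1.add h3
      rw [zero_mul, add_zero] at h4
      exact h4.congr fun n => (hBe n l a b).symm
    have hPo : Pᵀ * P = 1 := by
      have hcont : Continuous fun Q : Matrix (Fin d) (Fin d) ℝ => Qᵀ * Q :=
        (continuous_id.matrix_transpose).matrix_mul continuous_id
      have h1 : Tendsto (fun n => (Wn n)ᵀ * Wn n) atTop (nhds (Pᵀ * P)) :=
        (hcont.tendsto P).comp hW
      have h2 : (fun n => (Wn n)ᵀ * Wn n) = fun _ => (1 : Matrix (Fin d) (Fin d) ℝ) :=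
        funext hOW
      rw [h2] at h1
      exact tendsto_nhds_unique h1 tendsto_const_nhds
    have hPP' : P * Pᵀ = 1 := mul_eq_one_comm.mp hPo
    -- off-diagonal of Bn is O(e^2); in the limit Yl is diagonal
    have hoffB : ∀ n, (∑ l, ∑ a, ∑ b, if a = b then 0 else (Bn n l a b) ^ 2)
        ≤ (e n) ^ 2 * (L : ℝ) := by
      intro n
      have h2 := (hUt (e n) (hepos n)).2 Ubar hUbar
      simp only [show ∀ l, (Ut (e n))ᵀ * M (e n) l * Ut (e n) = Bn n l from hBM n] at h2
      have hRHS : ∀ l, Ubarᵀ * M (e n) l * Ubar = Dl l + (e n) • Ss l := by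
        intro l
        rw [hM, Matrix.mul_add, Matrix.add_mul]
        congr 1
        · simp only [Matrix.mul_assoc]
          rw [hcancelU, hUbar, Matrix.mul_one, hDl]
        · simp only [hSs, Matrix.mul_smul, Matrix.smul_mul, Matrix.mul_assoc]
      simp only [hRHS] at h2
      refine le_trans h2 ?_
      have hterm : ∀ l (a b : Fin d),
          (if a = b then 0 else ((Dl l + (e n) • Ss l) a b) ^ 2)
          ≤ (e n) ^ 2 * (Ss l a b) ^ 2 := by
        intro l a b
        by_cases hab : a = b
        · rw [if_pos hab]
          positivity
        · rw [if_neg hab, Matrix.add_apply, Matrix.smul_apply, smul_eq_mul]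
          rw [show Dl l a b = 0 from Matrix.diagonal_apply_ne _ hab]
          rw [zero_add, mul_pow]
      calc ∑ l, ∑ a, ∑ b, (if a = b then 0 else ((Dl l + (e n) • Ss l) a b) ^ 2)
          ≤ ∑ l, ∑ a, ∑ b, (e n) ^ 2 * (Ss l a b) ^ 2 := by
            refine Finset.sum_le_sum fun l _ => Finset.sum_le_sum fun a _ =>
              Finset.sum_le_sum fun b _ => hterm l a b
        _ = ∑ l : Fin L, (e n) ^ 2 * (∑ a, ∑ b, (Ss l a b) ^ 2) := by
            refine Finset.sum_congr rfl fun l _ => ?_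
            rw [Finset.mul_sum]
            exact Finset.sum_congr rfl fun a _ => by rw [Finset.mul_sum]
        _ ≤ ∑ l : Fin L, (e n) ^ 2 * 1 := by
            refine Finset.sum_le_sum fun l _ => ?_
            exact mul_le_mul_of_nonneg_left (hSfrob l) (by positivity)
        _ = (e n) ^ 2 * (L : ℝ) := by
            rw [Finset.sum_const, Finset.card_univ, Fintype.card_fin, nsmul_eq_mul]
            ring
    have hoffY : ∀ l (a b : Fin d), a ≠ b → Yl l a b = 0 := by
      have hlim : Tendsto (fun n => ∑ l, ∑ a, ∑ b, if a = b then 0 else (Bn n l a b) ^ 2)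
          atTop (nhds (∑ l, ∑ a, ∑ b, if a = b then 0 else (Yl l a b) ^ 2)) := by
        refine tendsto_finset_sum _ fun l _ => tendsto_finset_sum _ fun a _ =>
          tendsto_finset_sum _ fun b _ => ?_
        by_cases hab : a = b
        · simpa [hab] using (tendsto_const_nhds :
            Tendsto (fun _ : ℕ => (0:ℝ)) atTop (nhds 0))
        · simp only [if_neg hab]
          exact (hBconv l a b).pow 2
      have hlim2 : Tendsto (fun n => (e n) ^ 2 * (L : ℝ)) atTop (nhds 0) := by
        have := (he0.pow 2).mul_const (L : ℝ)
        simpa using this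
      have hle0 := le_of_tendsto_of_tendsto' hlim hlim2 hoffB
      have hnn : ∀ (l : Fin L) (a b : Fin d),
          0 ≤ (if a = b then (0:ℝ) else (Yl l a b) ^ 2) := by
        intro l a b
        by_cases hab : a = b
        · simp [hab]
        · simp [hab, sq_nonneg]
      intro l a b hab
      have s1 : (if a = b then (0:ℝ) else (Yl l a b) ^ 2)
          ≤ ∑ b', (if a = b' then 0 else (Yl l a b') ^ 2) :=
        Finset.single_le_sum (fun b' _ => hnn l a b') (Finset.mem_univ b)
      have s2 : ∑ b', (if a = b' then (0:ℝ) else (Yl l a b') ^ 2)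
          ≤ ∑ a', ∑ b', (if a' = b' then 0 else (Yl l a' b') ^ 2) :=
        Finset.single_le_sum
          (f := fun a' => ∑ b', (if a' = b' then (0:ℝ) else (Yl l a' b') ^ 2))
          (fun a' _ => Finset.sum_nonneg fun b' _ => hnn l a' b') (Finset.mem_univ a)
      have s3 : ∑ a', ∑ b', (if a' = b' then (0:ℝ) else (Yl l a' b') ^ 2)
          ≤ ∑ l', ∑ a', ∑ b', (if a' = b' then 0 else (Yl l' a' b') ^ 2) :=
        Finset.single_le_sum
          (f := fun l' => ∑ a', ∑ b', (if a' = b' then (0:ℝ) else (Yl l' a' b') ^ 2))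
          (fun l' _ => Finset.sum_nonneg fun a' _ =>
            Finset.sum_nonneg fun b' _ => hnn l' a' b') (Finset.mem_univ l)
      rw [if_neg hab] at s1
      have : (Yl l a b) ^ 2 ≤ 0 := by linarith
      nlinarith [sq_nonneg (Yl l a b)]
    -- eigenstructure
    set Δv : Fin d → Fin L → ℝ := fun p l => Yl l p p with hΔv
    have hent : ∀ (a p : Fin d) (l : Fin L), lam a l * P a p = P a p * Δv p l := by
      intro a p l
      have hYdiag : Yl l = Matrix.diagonal (fun p => Δv p l) := by
        ext a' b'
        by_cases hab : a' = b'
        · rw [hab, Matrix.diagonal_apply_eq]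
        · rw [Matrix.diagonal_apply_ne _ hab, hoffY l a' b' hab]
      have h1 : Dl l * P = P * Matrix.diagonal (fun p => Δv p l) := by
        rw [← hYdiag, hYl]
        calc Dl l * P = (P * Pᵀ) * (Dl l * P) := by rw [hPP', Matrix.one_mul]
          _ = P * (Pᵀ * Dl l * P) := by simp only [Matrix.mul_assoc]
      have h2 := congrFun (congrFun h1 a) p
      rw [show (Dl l * P) a p = lam a l * P a p from Matrix.diagonal_mul _ _ a p,
        show (P * Matrix.diagonal (fun p => Δv p l)) a p = P a p * Δv p l from
          Matrix.mul_diagonal _ _ a p] at h2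
      exact h2
    -- find the distinguished column q of P
    have hProw : ∑ p, (P j p) ^ 2 = 1 := row_sq hPo j
    have hqex : ∃ q, P j q ≠ 0 := by
      by_contra hq
      push_neg at hq
      rw [(Finset.sum_congr rfl fun p _ => by rw [hq p] :
        ∑ p, (P j p) ^ 2 = ∑ _p : Fin d, (0:ℝ) ^ 2)] at hProw
      simp at hProw
    obtain ⟨q, hq0⟩ := hqex
    have hΔq : ∀ l, Δv q l = lam j l := by
      intro l
      have h1 := hent j q l
      have h2 : P j q * (lam j l - Δv q l) = 0 := by linear_combination h1
      rcases mul_eq_zero.mp h2 with h | h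
      · exact absurd h hq0
      · linarith
    have hcolq : ∀ r, r ≠ j → P r q = 0 := by
      intro r hrj
      by_contra hne
      have hall : ∀ l, lam r l = lam j l := by
        intro l
        have h1 := hent r q l
        rw [hΔq l] at h1
        have h2 : P r q * (lam r l - lam j l) = 0 := by linear_combination h1
        rcases mul_eq_zero.mp h2 with h | h
        · exact absurd h hne
        · linarith
      refine hdenom r j hrj hj ?_
      rw [(Finset.sum_congr rfl fun l _ => by rw [hall l] :
        (∑ l, (lam r l - lam j l) ^ 2) = ∑ l : Fin L, (lam j l - lam j l) ^ 2)]
      simp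
    set σ : ℝ := P j q with hσ
    have hσ2 : σ ^ 2 = 1 := by
      have h1 := col_sq hPo q
      rw [Finset.sum_eq_single j (fun r _ hrj => by rw [hcolq r hrj]; ring)
        (fun h => absurd (Finset.mem_univ j) h)] at h1
      exact h1
    have hProwj : ∀ p, p ≠ q → P j p = 0 := by
      intro p hpq
      have h1 : ∑ p' ∈ Finset.univ.erase q, (P j p') ^ 2 = 0 := by
        have h2 := hProw
        rw [← Finset.add_sum_erase Finset.univ (fun p' => (P j p') ^ 2)
          (Finset.mem_univ q)] at h2
        nlinarith [hσ2, h2]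
      have := Finset.sum_eq_zero_iff_of_nonneg
        (fun p' _ => sq_nonneg (P j p')) |>.mp h1 p
        (Finset.mem_erase.mpr ⟨hpq, Finset.mem_univ p⟩)
      nlinarith [this]
    set γv : Fin d → ℝ := fun p => ∑ l, (Δv p l - lam j l) ^ 2 with hγv
    have hγpos : ∀ p, p ≠ q → 0 < γv p := by
      intro p hpq
      rcases lt_or_eq_of_le (Finset.sum_nonneg fun l _ =>
        sq_nonneg (Δv p l - lam j l)) with h | h
      · exact h
      exfalso
      have hzero : ∀ l, Δv p l = lam j l := by
        intro l
        have := Finset.sum_eq_zero_iff_of_nonneg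
          (fun l _ => sq_nonneg (Δv p l - lam j l)) |>.mp h.symm l (Finset.mem_univ l)
        nlinarith [this]
      have hcol : ∑ r, (P r p) ^ 2 = 1 := col_sq hPo p
      have hrex : ∃ r, P r p ≠ 0 := by
        by_contra hr
        push_neg at hr
        rw [(Finset.sum_congr rfl fun r _ => by rw [hr r] :
          ∑ r, (P r p) ^ 2 = ∑ _r : Fin d, (0:ℝ) ^ 2)] at hcol
        simp at hcol
      obtain ⟨r, hr0⟩ := hrex
      have hrlam : ∀ l, lam r l = lam j l := by
        intro l
        have h1 := hent r p l
        rw [hzero l] at h1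
        have h2 : P r p * (lam r l - lam j l) = 0 := by linear_combination h1
        rcases mul_eq_zero.mp h2 with h | h
        · exact absurd h hr0
        · linarith
      by_cases hrj : r = j
      · rw [hrj] at hr0
        exact hr0 (hProwj p hpq)
      · refine hdenom r j hrj hj ?_
        rw [(Finset.sum_congr rfl fun l _ => by rw [hrlam l] :
          (∑ l, (lam r l - lam j l) ^ 2) = ∑ l : Fin L, (lam j l - lam j l) ^ 2)]
        simp
    -- quantitative sequences
    set m2 : ℕ → ℝ := fun n => 1 - (Wn n j q) ^ 2 with hm2
    have hm2col : ∀ n, ∑ r ∈ Finset.univ.erase j, (Wn n r q) ^ 2 = m2 n := by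
      intro n
      have h1 := col_sq (hOW n) q
      rw [← Finset.add_sum_erase Finset.univ (fun r => (Wn n r q) ^ 2)
        (Finset.mem_univ j)] at h1
      simp only [hm2]
      linarith
    have hm2row : ∀ n, ∑ p ∈ Finset.univ.erase q, (Wn n j p) ^ 2 = m2 n := by
      intro n
      have h1 := row_sq (hOW n) j
      rw [← Finset.add_sum_erase Finset.univ (fun p => (Wn n j p) ^ 2)
        (Finset.mem_univ q)] at h1
      simp only [hm2]
      linarith
    have hm2nn : ∀ n, 0 ≤ m2 n := fun n => by
      rw [← hm2col n]; exact Finset.sum_nonneg fun r _ => sq_nonneg _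
    have hm2le1 : ∀ n, m2 n ≤ 1 := fun n => by
      simp only [hm2]; nlinarith [sq_nonneg (Wn n j q)]
    obtain ⟨sb, hsb⟩ : ∃ s : Bool, (if s then (1:ℝ) else -1) = σ := by
      have h1 : (σ - 1) * (σ + 1) = 0 := by linear_combination hσ2
      rcases mul_eq_zero.mp h1 with h | h
      · exact ⟨true, by simp; linarith⟩
      · exact ⟨false, by simp; linarith⟩
    have hval : ∀ n, ∑ r, (σ * Ut (e n) r q - Ubar r j) ^ 2
        = m2 n + (1 - σ * Wn n j q) ^ 2 := by
      intro n
      have hUte : ∀ r, Ut (e n) r q = ∑ a, Ubar r a * Wn n a q := by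
        intro r
        rw [← hUtW n, Matrix.mul_apply]
      set v : Fin d → ℝ := fun a => σ * Wn n a q - (if a = j then 1 else 0) with hv
      have hstep : ∀ r, σ * Ut (e n) r q - Ubar r j = ∑ a, Ubar r a * v a := by
        intro r
        rw [hUte r, Finset.mul_sum]
        have hexp : ∀ a, Ubar r a * v a
            = σ * (Ubar r a * Wn n a q) - Ubar r a * (if a = j then 1 else 0) := by
          intro a; simp only [hv]; ring
        rw [Finset.sum_congr rfl fun a _ => hexp a, Finset.sum_sub_distrib,
          sum_mul_boole' j (fun a => Ubar r a)]
      rw [Finset.sum_congr rfl fun r _ => by rw [hstep r]]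
      have hGt : Ubarᵀ * Ubarᵀᵀ = 1 := by rw [Matrix.transpose_transpose]; exact hUbar
      have h1 := iso_sum_sq Ubarᵀ hGt v
      have h2 : ∀ r : Fin d, (∑ a, Ubarᵀ a r * v a) = ∑ a, Ubar r a * v a := by
        intro r
        exact Finset.sum_congr rfl fun a _ => by rw [Matrix.transpose_apply]
      rw [Finset.sum_congr rfl fun r _ => by rw [h2 r]] at h1
      rw [h1, ← Finset.add_sum_erase Finset.univ (fun a => (v a) ^ 2)
        (Finset.mem_univ j)]
      have h3 : ∑ a ∈ Finset.univ.erase j, (v a) ^ 2 = m2 n := by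
        rw [← hm2col n]
        refine Finset.sum_congr rfl fun a ha => ?_
        have haj := (Finset.mem_erase.mp ha).1
        simp only [hv, if_neg haj, sub_zero]
        linear_combination ((Wn n a q) ^ 2) * hσ2
      have h4 : (v j) ^ 2 = (1 - σ * Wn n j q) ^ 2 := by
        have hvj : v j = σ * Wn n j q - 1 := by simp [hv]
        rw [hvj]
        ring
      rw [h3, h4]
      ring
    have hlow : ∀ n, (c + δ) * e n
        < Real.sqrt (m2 n + (1 - σ * Wn n j q) ^ 2) := by
      intro n
      have hle1 : f (e n) ≤ (1 / e n)
          * Real.sqrt (m2 n + (1 - σ * Wn n j q) ^ 2) := by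
        rw [hf]
        simp only
        refine mul_le_mul_of_nonneg_left ?_ (one_div_nonneg.mpr (hepos n).le)
        have hbdd1 : BddBelow (Set.range fun i : Fin d => ⨅ s : Bool,
            Real.sqrt (∑ r, ((if s then (1:ℝ) else -1) * Ut (e n) r i - Ubar r j) ^ 2)) := by
          refine ⟨0, ?_⟩
          rintro x ⟨i, rfl⟩
          exact Real.iInf_nonneg fun s => Real.sqrt_nonneg _
        have h1 : (⨅ (i : Fin d) (s : Bool), Real.sqrt
              (∑ r, ((if s then (1:ℝ) else -1) * Ut (e n) r i - Ubar r j) ^ 2))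
            ≤ ⨅ s : Bool, Real.sqrt
              (∑ r, ((if s then (1:ℝ) else -1) * Ut (e n) r q - Ubar r j) ^ 2) :=
          ciInf_le hbdd1 q
        have h2 : (⨅ s : Bool, Real.sqrt
              (∑ r, ((if s then (1:ℝ) else -1) * Ut (e n) r q - Ubar r j) ^ 2))
            ≤ Real.sqrt
              (∑ r, ((if sb then (1:ℝ) else -1) * Ut (e n) r q - Ubar r j) ^ 2) :=
          ciInf_le ⟨0, by rintro x ⟨s, rfl⟩; exact Real.sqrt_nonneg _⟩ sb
        rw [(Finset.sum_congr rfl fun r _ => by rw [hsb] :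
          (∑ r, ((if sb then (1:ℝ) else -1) * Ut (e n) r q - Ubar r j) ^ 2)
          = ∑ r, (σ * Ut (e n) r q - Ubar r j) ^ 2), hval n] at h2
        exact le_trans h1 h2
      have h3 := hef n
      push_neg at h3
      have h4 := lt_of_lt_of_le h3 hle1
      have h5 := mul_lt_mul_of_pos_right h4 (hepos n)
      calc (c + δ) * e n < (1 / e n
          * Real.sqrt (m2 n + (1 - σ * Wn n j q) ^ 2)) * e n := h5
        _ = Real.sqrt (m2 n + (1 - σ * Wn n j q) ^ 2) := by
            rw [one_div, inv_mul_eq_div, div_mul_eq_mul_div, mul_div_assoc,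
              div_self (hepos n).ne', mul_one]
    have hσW : Tendsto (fun n => σ * Wn n j q) atTop (nhds 1) := by
      have h1 := (tendsto_const_nhds (x := σ)).mul (hWe j q)
      rw [show σ * P j q = 1 by rw [← hσ]; nlinarith [hσ2]] at h1
      exact h1
    have hm2lim : Tendsto m2 atTop (nhds 0) := by
      have h1 := (tendsto_const_nhds (x := (1:ℝ))).sub ((hWe j q).pow 2)
      rw [show (1:ℝ) - (P j q) ^ 2 = 0 by rw [← hσ]; nlinarith [hσ2]] at h1
      exact h1
    have hev1 : ∀ᶠ n in atTop, 0 ≤ σ * Wn n j q :=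
      hσW.eventually_const_le (by norm_num : (0:ℝ) < 1)
    have hkey : ∀ᶠ n in atTop, Real.sqrt (m2 n) ≤ (c + δ / 2) * e n := by
      by_contra hcon2
      rw [Filter.not_eventually] at hcon2
      obtain ⟨ψ, hψ, hψp⟩ := Filter.extraction_of_frequently_atTop hcon2
      have hψp' : ∀ m, (c + δ / 2) * e (ψ m) < Real.sqrt (m2 (ψ m)) := by
        intro m
        have := hψp m
        push_neg at this
        exact this
      set m' : ℕ → ℝ := fun m => Real.sqrt (m2 (ψ m)) with hm'
      set e' : ℕ → ℝ := fun m => e (ψ m) with he'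
      set h' : ℕ → ℝ := fun m => m' m + e' m with hh'
      have hh'pos : ∀ m, 0 < h' m := fun m =>
        add_pos_of_nonneg_of_pos (Real.sqrt_nonneg _) (hepos (ψ m))
      have hm'sq : ∀ m, (m' m) ^ 2 = m2 (ψ m) := fun m =>
        Real.sq_sqrt (hm2nn (ψ m))
      have hm'le : ∀ m, m' m ≤ h' m := fun m => by
        have := hepos (ψ m)
        simp only [hh']
        linarith
      have he'le : ∀ m, e' m ≤ h' m := fun m => by
        have := Real.sqrt_nonneg (m2 (ψ m))
        simp only [hh', hm']
        linarith
      -- normalized sequences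
      set vv : ℕ → Fin d → ℝ :=
        fun m p => if p = q then 0 else Wn (ψ m) j p / h' m with hvv
      set zz : ℕ → Fin d → ℝ :=
        fun m r => if r = j then 0 else Wn (ψ m) r q / h' m with hzz
      set tt : ℕ → ℝ := fun m => e' m / h' m with htt
      have hWjp_le : ∀ m p, p ≠ q → (Wn (ψ m) j p) ^ 2 ≤ m2 (ψ m) := by
        intro m p hpq
        rw [← hm2row (ψ m)]
        exact Finset.single_le_sum (f := fun p' => (Wn (ψ m) j p') ^ 2)
          (fun p' _ => sq_nonneg _)
          (Finset.mem_erase.mpr ⟨hpq, Finset.mem_univ p⟩)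
      have hWrq_le : ∀ m r, r ≠ j → (Wn (ψ m) r q) ^ 2 ≤ m2 (ψ m) := by
        intro m r hrj
        rw [← hm2col (ψ m)]
        exact Finset.single_le_sum (f := fun r' => (Wn (ψ m) r' q) ^ 2)
          (fun r' _ => sq_nonneg _)
          (Finset.mem_erase.mpr ⟨hrj, Finset.mem_univ r⟩)
      have habs_le : ∀ (x : ℝ) m, x ^ 2 ≤ m2 (ψ m) → |x| ≤ m' m := by
        intro x m hx
        rw [← Real.sqrt_sq_eq_abs]
        exact Real.sqrt_le_sqrt hx
      have hdiv_mem : ∀ (x : ℝ) m, x ^ 2 ≤ m2 (ψ m) →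
          x / h' m ∈ Set.Icc (-1:ℝ) 1 := by
        intro x m hx
        have h1 : |x| ≤ h' m := le_trans (habs_le x m hx) (hm'le m)
        have h2 : |x / h' m| ≤ 1 := by
          rw [abs_div, abs_of_pos (hh'pos m)]
          exact (div_le_one (hh'pos m)).mpr h1
        exact abs_le.mp h2
      have hvvmem : ∀ m, vv m ∈ {w : Fin d → ℝ | ∀ i, w i ∈ Set.Icc (-1:ℝ) 1} := by
        intro m p
        by_cases hp : p = q
        · simp [hvv, hp]
        · simp only [hvv, if_neg hp]
          exact hdiv_mem _ m (hWjp_le m p hp)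
      have hzzmem : ∀ m, zz m ∈ {w : Fin d → ℝ | ∀ i, w i ∈ Set.Icc (-1:ℝ) 1} := by
        intro m r
        by_cases hr : r = j
        · simp [hzz, hr]
        · simp only [hzz, if_neg hr]
          exact hdiv_mem _ m (hWrq_le m r hr)
      have httmem : ∀ m, tt m ∈ Set.Icc (0:ℝ) 1 := by
        intro m
        constructor
        · exact div_nonneg (hepos (ψ m)).le (hh'pos m).le
        · exact (div_le_one (hh'pos m)).mpr (he'le m)
      -- extract convergent subsequences
      obtain ⟨v8, hv8K, φ1, hφ1, hvconv⟩ := vec_compact.tendsto_subseq hvvmem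
      obtain ⟨z8, hz8K, φ2, hφ2, hzconv⟩ :=
        vec_compact.tendsto_subseq (fun m => hzzmem (φ1 m))
      obtain ⟨t8, ht8K, φ3, hφ3, htconv⟩ :=
        (isCompact_Icc (a := (0:ℝ)) (b := 1)).tendsto_subseq
          (fun m => httmem (φ1 (φ2 m)))
      set χ : ℕ → ℕ := fun m => φ1 (φ2 (φ3 m)) with hχ
      have hχmono : StrictMono χ := hφ1.comp (hφ2.comp hφ3)
      set ι : ℕ → ℕ := fun m => ψ (χ m) with hι
      have hιmono : StrictMono ι := hψ.comp hχmono
      have hv : Tendsto (fun m => vv (χ m)) atTop (nhds v8) :=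
        hvconv.comp ((hφ2.comp hφ3).tendsto_atTop)
      have hz : Tendsto (fun m => zz (χ m)) atTop (nhds z8) :=
        hzconv.comp (hφ3.tendsto_atTop)
      have ht : Tendsto (fun m => tt (χ m)) atTop (nhds t8) := htconv
      have hvp : ∀ p, Tendsto (fun m => vv (χ m) p) atTop (nhds (v8 p)) :=
        fun p => (tendsto_pi_nhds.mp hv) p
      have hzr : ∀ r, Tendsto (fun m => zz (χ m) r) atTop (nhds (z8 r)) :=
        fun r => (tendsto_pi_nhds.mp hz) r
      have hWι : ∀ r i, Tendsto (fun m => Wn (ι m) r i) atTop (nhds (P r i)) :=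
        fun r i => (hWe r i).comp hιmono.tendsto_atTop
      have he'0 : Tendsto (fun m => e (ι m)) atTop (nhds 0) :=
        he0.comp hιmono.tendsto_atTop
      have hm20 : Tendsto (fun m => m2 (ι m)) atTop (nhds 0) :=
        hm2lim.comp hιmono.tendsto_atTop
      -- the basic relation m'/h' = 1 - tt
      have hmh : ∀ m, m' (χ m) / h' (χ m) = 1 - tt (χ m) := by
        intro m
        have h0 := (hh'pos (χ m)).ne'
        simp only [htt, hh'] at h0 ⊢
        rw [eq_sub_iff_add_eq, ← add_div, div_self h0]
      -- (E3): limit norm identity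
      have hE3 : ∑ p ∈ Finset.univ.erase q, (v8 p) ^ 2 = (1 - t8) ^ 2 := by
        have hk1 : ∀ m, ∑ p ∈ Finset.univ.erase q, (vv (χ m) p) ^ 2
            = (1 - tt (χ m)) ^ 2 := by
          intro m
          have h1 : ∑ p ∈ Finset.univ.erase q, (vv (χ m) p) ^ 2
              = (∑ p ∈ Finset.univ.erase q, (Wn (ψ (χ m)) j p) ^ 2) / (h' (χ m)) ^ 2 := by
            rw [Finset.sum_div]
            refine Finset.sum_congr rfl fun p hp => ?_
            rw [hvv]
            simp only [if_neg (Finset.mem_erase.mp hp).1]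
            rw [div_pow]
          rw [h1, hm2row (ψ (χ m)), ← hm'sq (χ m), ← div_pow, hmh m]
        have hlim1 : Tendsto (fun m => ∑ p ∈ Finset.univ.erase q, (vv (χ m) p) ^ 2)
            atTop (nhds (∑ p ∈ Finset.univ.erase q, (v8 p) ^ 2)) :=
          tendsto_finset_sum _ fun p _ => (hvp p).pow 2
        have hlim2 : Tendsto (fun m => (1 - tt (χ m)) ^ 2) atTop
            (nhds ((1 - t8) ^ 2)) :=
          (((tendsto_const_nhds (x := (1:ℝ))).sub ht).pow 2)
        rw [(funext hk1 : (fun m => ∑ p ∈ Finset.univ.erase q, (vv (χ m) p) ^ 2)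
          = fun m => (1 - tt (χ m)) ^ 2)] at hlim1
        exact tendsto_nhds_unique hlim1 hlim2
      -- (E4): limit of the contradiction hypothesis
      have hE4 : (c + δ / 2) * t8 ≤ 1 - t8 := by
        have hk1 : ∀ m, (c + δ / 2) * tt (χ m) ≤ 1 - tt (χ m) := by
          intro m
          rw [← hmh m]
          have h1 := (hψp' (χ m)).le
          calc (c + δ / 2) * tt (χ m) = ((c + δ / 2) * e' (χ m)) / h' (χ m) := by
                rw [htt]; ring
            _ ≤ m' (χ m) / h' (χ m) :=
                (div_le_div_iff_of_pos_right (hh'pos (χ m))).mpr h1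
        have hlim1 : Tendsto (fun m => (c + δ / 2) * tt (χ m)) atTop
            (nhds ((c + δ / 2) * t8)) := (tendsto_const_nhds (x := c + δ / 2)).mul ht
        have hlim2 : Tendsto (fun m => 1 - tt (χ m)) atTop (nhds (1 - t8)) :=
          (tendsto_const_nhds (x := (1:ℝ))).sub ht
        exact le_of_tendsto_of_tendsto' hlim1 hlim2 hk1
      -- entry formula for the diagonal part
      have hWDW : ∀ n l (a b : Fin d), ((Wn n)ᵀ * Dl l * Wn n) a b
          = ∑ r, lam r l * Wn n r a * Wn n r b := by
        intro n l a b
        rw [Matrix.mul_assoc, Matrix.mul_apply]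
        refine Finset.sum_congr rfl fun r _ => ?_
        rw [Matrix.transpose_apply,
          show (Dl l * Wn n) r b = lam r l * Wn n r b from
            Matrix.diagonal_mul (fun i => lam i l) (Wn n) r b]
        ring
      have hQe : ∀ n (r p : Fin d), (Pᵀ * Wn n) r p = ∑ a, P a r * Wn n a p := by
        intro n r p
        rw [Matrix.mul_apply]
        exact Finset.sum_congr rfl fun a _ => by rw [Matrix.transpose_apply]
      have hQlim : ∀ (r p : Fin d), Tendsto (fun m => (Pᵀ * Wn (ι m)) r p) atTop
          (nhds ((1 : Matrix (Fin d) (Fin d) ℝ) r p)) := by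
        intro r p
        have h1 : Tendsto (fun m => ∑ a, P a r * Wn (ι m) a p) atTop
            (nhds (∑ a, P a r * P a p)) :=
          tendsto_finset_sum _ fun a _ => tendsto_const_nhds.mul (hWι a p)
        have h2 : ∑ a, P a r * P a p = (1 : Matrix (Fin d) (Fin d) ℝ) r p := by
          rw [← hPo, Matrix.mul_apply]
          exact Finset.sum_congr rfl fun a _ => by rw [Matrix.transpose_apply]
        rw [h2] at h1
        exact h1.congr fun m => (hQe (ι m) r p).symm
      have hQorth : ∀ n, (Pᵀ * Wn n)ᵀ * (Pᵀ * Wn n) = 1 := by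
        intro n
        rw [Matrix.transpose_mul, Matrix.transpose_transpose]
        simp only [Matrix.mul_assoc]
        rw [← Matrix.mul_assoc P Pᵀ (Wn n), hPP', Matrix.one_mul]
        exact hOW n
      -- (main per-column analysis)
      have hfinal_p : ∀ p, p ≠ q → v8 p = t8 * ∑ a, P a p * E a j := by
        intro p hpq
        have hQqp : ∀ n, (Pᵀ * Wn n) q p = σ * Wn n j p := by
          intro n
          rw [hQe]
          rw [Finset.sum_eq_single j (fun a _ haj => by rw [hcolq a haj, zero_mul])
            (fun h => absurd (Finset.mem_univ j) h)]
        have hZsum : ∀ n, (Pᵀ * Wn n) p q + (Pᵀ * Wn n) q p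
            = - ∑ r, ((Pᵀ * Wn n) r p - (1 : Matrix (Fin d) (Fin d) ℝ) r p)
                * ((Pᵀ * Wn n) r q - (1 : Matrix (Fin d) (Fin d) ℝ) r q) := by
          intro n
          have h0 : ∑ r, (Pᵀ * Wn n) r p * (Pᵀ * Wn n) r q = 0 := by
            have h1 := congrFun (congrFun (hQorth n) p) q
            rw [Matrix.mul_apply] at h1
            rw [(Finset.sum_congr rfl fun r _ => by rw [Matrix.transpose_apply] :
              (∑ r, (Pᵀ * Wn n)ᵀ p r * (Pᵀ * Wn n) r q)
                = ∑ r, (Pᵀ * Wn n) r p * (Pᵀ * Wn n) r q),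
              Matrix.one_apply_ne hpq] at h1
            exact h1
          have hexp : ∀ r, ((Pᵀ * Wn n) r p - (1 : Matrix (Fin d) (Fin d) ℝ) r p)
              * ((Pᵀ * Wn n) r q - (1 : Matrix (Fin d) (Fin d) ℝ) r q)
              = (Pᵀ * Wn n) r p * (Pᵀ * Wn n) r q
                - (if r = p then 1 else 0) * (Pᵀ * Wn n) r q
                - (if r = q then 1 else 0) * (Pᵀ * Wn n) r p
                + (if r = p then 1 else 0) * ((if r = q then (1:ℝ) else 0)) := by
            intro r
            rw [Matrix.one_apply, Matrix.one_apply]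
            ring
          rw [Finset.sum_congr rfl fun r _ => hexp r]
          rw [Finset.sum_add_distrib, Finset.sum_sub_distrib, Finset.sum_sub_distrib,
            h0, sum_if1 p (fun r => (Pᵀ * Wn n) r q),
            sum_if1 q (fun r => (Pᵀ * Wn n) r p)]
          have hz : ∑ r, (if r = p then (1:ℝ) else 0) * (if r = q then (1:ℝ) else 0)
              = 0 := by
            refine Finset.sum_eq_zero fun r _ => ?_
            by_cases h1 : r = p
            · rw [h1, if_neg hpq, mul_zero]
            · rw [if_neg h1, zero_mul]
          rw [hz]
          ring
        -- skew limit
        have hsgn : ∀ᶠ m in atTop, 0 ≤ σ * Wn (ι m) j q :=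
          hιmono.tendsto_atTop.eventually hev1
        have hid : ∀ m, ∑ a ∈ Finset.univ.erase j, P a p * zz (χ m) a
            = -(σ * vv (χ m) p)
              - (∑ r, ((Pᵀ * Wn (ι m)) r p - (1 : Matrix (Fin d) (Fin d) ℝ) r p)
                  * (((Pᵀ * Wn (ι m)) r q - (1 : Matrix (Fin d) (Fin d) ℝ) r q)
                    / h' (χ m))) := by
          intro m
          have hL : ∑ a ∈ Finset.univ.erase j, P a p * zz (χ m) a
              = (Pᵀ * Wn (ι m)) p q / h' (χ m) := by
            have h1 : ∑ a ∈ Finset.univ.erase j, P a p * zz (χ m) a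
                = (∑ a ∈ Finset.univ.erase j, P a p * Wn (ι m) a q) / h' (χ m) := by
              rw [Finset.sum_div]
              refine Finset.sum_congr rfl fun a ha => ?_
              rw [hzz]
              simp only [if_neg (Finset.mem_erase.mp ha).1]
              ring
            rw [h1, hQe]
            congr 1
            rw [← Finset.add_sum_erase Finset.univ (fun a => P a p * Wn (ι m) a q)
              (Finset.mem_univ j), hProwj p hpq, zero_mul, zero_add]
          have h3 : (Pᵀ * Wn (ι m)) p q = -(σ * Wn (ι m) j p)
              - ∑ r, ((Pᵀ * Wn (ι m)) r p - (1 : Matrix (Fin d) (Fin d) ℝ) r p)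
                * ((Pᵀ * Wn (ι m)) r q - (1 : Matrix (Fin d) (Fin d) ℝ) r q) := by
            have h4 := hZsum (ι m)
            rw [hQqp (ι m)] at h4
            linarith
          rw [hL, h3, sub_div, Finset.sum_div]
          congr 1
          · rw [hvv]
            simp only [if_neg hpq]
            ring
          · exact Finset.sum_congr rfl fun r _ => by rw [mul_div_assoc]
        have hErr : Tendsto (fun m => ∑ r,
            ((Pᵀ * Wn (ι m)) r p - (1 : Matrix (Fin d) (Fin d) ℝ) r p)
              * (((Pᵀ * Wn (ι m)) r q - (1 : Matrix (Fin d) (Fin d) ℝ) r q)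
                / h' (χ m))) atTop (nhds 0) := by
          have hyb : ∀ᶠ m in atTop, ∀ r : Fin d,
              |((Pᵀ * Wn (ι m)) r q - (1 : Matrix (Fin d) (Fin d) ℝ) r q) / h' (χ m)|
                ≤ (d : ℝ) := by
            filter_upwards [hsgn] with m hm
            intro r
            -- |W a q - σ ind| ≤ m' for each a
            have hya : ∀ a : Fin d,
                |Wn (ι m) a q - σ * (if a = j then 1 else 0)| ≤ m' (χ m) := by
              intro a
              by_cases haj : a = j
              · rw [haj, if_pos rfl, mul_one]
                refine habs_le _ (χ m) ?_
                have hb1 : (1 - σ * Wn (ι m) j q) * (1 + σ * Wn (ι m) j q)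
                    = m2 (ι m) := by
                  simp only [hm2]
                  linear_combination (-(Wn (ι m) j q) ^ 2) * hσ2
                have hsq : (Wn (ι m) j q - σ) ^ 2 = (1 - σ * Wn (ι m) j q) ^ 2 := by
                  linear_combination (1 - (Wn (ι m) j q) ^ 2) * hσ2
                rw [hsq]
                nlinarith [hb1, hm, hm2nn (ι m), hm2le1 (ι m)]
              · rw [if_neg haj, mul_zero, sub_zero]
                exact habs_le _ (χ m) (hWrq_le (χ m) a haj)
            have hQy : (Pᵀ * Wn (ι m)) r q - (1 : Matrix (Fin d) (Fin d) ℝ) r q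
                = ∑ a, P a r * (Wn (ι m) a q - σ * (if a = j then 1 else 0)) := by
              have h5 : ∑ a, P a r * (σ * (if a = j then (1:ℝ) else 0))
                  = (1 : Matrix (Fin d) (Fin d) ℝ) r q := by
                have h6 : ∀ a, P a r * (σ * (if a = j then (1:ℝ) else 0))
                    = (P a r * σ) * (if a = j then 1 else 0) := fun a => by ring
                rw [Finset.sum_congr rfl fun a _ => h6 a,
                  sum_mul_boole' j (fun a => P a r * σ)]
                rw [Matrix.one_apply]
                by_cases hrq : r = q
                · rw [hrq, if_pos rfl, ← hσ]
                  nlinarith [hσ2]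
                · rw [if_neg hrq]
                  rw [show P j r = 0 from hProwj r (fun h => hrq h)]
                  ring
              rw [← h5, hQe]
              rw [← Finset.sum_sub_distrib]
              exact Finset.sum_congr rfl fun a _ => by ring
            have habs1 : |(Pᵀ * Wn (ι m)) r q - (1 : Matrix (Fin d) (Fin d) ℝ) r q|
                ≤ (d : ℝ) * m' (χ m) := by
              rw [hQy]
              calc |∑ a, P a r * (Wn (ι m) a q - σ * (if a = j then 1 else 0))|
                  ≤ ∑ a, |P a r * (Wn (ι m) a q - σ * (if a = j then 1 else 0))| :=
                    Finset.abs_sum_le_sum_abs _ _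
                _ ≤ ∑ _a : Fin d, m' (χ m) := by
                    refine Finset.sum_le_sum fun a _ => ?_
                    rw [abs_mul]
                    have hP1 : |P a r| ≤ 1 := by
                      have := hPK a r
                      exact abs_le.mpr this
                    calc |P a r| * |Wn (ι m) a q - σ * (if a = j then 1 else 0)|
                        ≤ 1 * |Wn (ι m) a q - σ * (if a = j then 1 else 0)| :=
                          mul_le_mul_of_nonneg_right hP1 (abs_nonneg _)
                      _ = |Wn (ι m) a q - σ * (if a = j then 1 else 0)| := one_mul _
                      _ ≤ m' (χ m) := hya a
                _ = (d : ℝ) * m' (χ m) := by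
                    rw [Finset.sum_const, Finset.card_univ, Fintype.card_fin,
                      nsmul_eq_mul]
            rw [abs_div, abs_of_pos (hh'pos (χ m))]
            rw [div_le_iff₀ (hh'pos (χ m))]
            calc |(Pᵀ * Wn (ι m)) r q - (1 : Matrix (Fin d) (Fin d) ℝ) r q|
                ≤ (d : ℝ) * m' (χ m) := habs1
              _ ≤ (d : ℝ) * h' (χ m) := by
                  refine mul_le_mul_of_nonneg_left (hm'le (χ m)) (by positivity)
          -- squeeze
          have hgl : Tendsto (fun m => ∑ r,
              |(Pᵀ * Wn (ι m)) r p - (1 : Matrix (Fin d) (Fin d) ℝ) r p| * (d:ℝ))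
              atTop (nhds 0) := by
            have h7 : Tendsto (fun m => ∑ r : Fin d,
                |(Pᵀ * Wn (ι m)) r p - (1 : Matrix (Fin d) (Fin d) ℝ) r p| * (d:ℝ))
                atTop (nhds (∑ r : Fin d, |(1:Matrix (Fin d) (Fin d) ℝ) r p
                  - (1 : Matrix (Fin d) (Fin d) ℝ) r p| * (d:ℝ))) := by
              refine tendsto_finset_sum _ fun r _ => ?_
              exact ((((hQlim r p).sub tendsto_const_nhds).abs).mul
                tendsto_const_nhds)
            simpa using h7
          refine squeeze_zero_norm' ?_ hgl
          filter_upwards [hyb] with m hm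
          calc ‖∑ r, ((Pᵀ * Wn (ι m)) r p - (1 : Matrix (Fin d) (Fin d) ℝ) r p)
              * (((Pᵀ * Wn (ι m)) r q - (1 : Matrix (Fin d) (Fin d) ℝ) r q)
                / h' (χ m))‖
              ≤ ∑ r, |((Pᵀ * Wn (ι m)) r p - (1 : Matrix (Fin d) (Fin d) ℝ) r p)
              * (((Pᵀ * Wn (ι m)) r q - (1 : Matrix (Fin d) (Fin d) ℝ) r q)
                / h' (χ m))| := Finset.abs_sum_le_sum_abs _ _
            _ ≤ ∑ r, |(Pᵀ * Wn (ι m)) r p - (1 : Matrix (Fin d) (Fin d) ℝ) r p| * (d:ℝ) := by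
                refine Finset.sum_le_sum fun r _ => ?_
                rw [abs_mul]
                exact mul_le_mul_of_nonneg_left (hm r) (abs_nonneg _)
        have hskew : ∑ a ∈ Finset.univ.erase j, P a p * z8 a = -(σ * v8 p) := by
          have hLHSlim : Tendsto (fun m => ∑ a ∈ Finset.univ.erase j,
              P a p * zz (χ m) a) atTop
              (nhds (∑ a ∈ Finset.univ.erase j, P a p * z8 a)) :=
            tendsto_finset_sum _ fun a _ => tendsto_const_nhds.mul (hzr a)
          have hRHSlim : Tendsto (fun m => -(σ * vv (χ m) p)
              - (∑ r, ((Pᵀ * Wn (ι m)) r p - (1 : Matrix (Fin d) (Fin d) ℝ) r p)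
                  * (((Pᵀ * Wn (ι m)) r q - (1 : Matrix (Fin d) (Fin d) ℝ) r q)
                    / h' (χ m)))) atTop (nhds (-(σ * v8 p) - 0)) :=
            ((tendsto_const_nhds.mul (hvp p)).neg).sub hErr
          rw [sub_zero] at hRHSlim
          rw [(funext hid : (fun m => ∑ a ∈ Finset.univ.erase j, P a p * zz (χ m) a)
            = _)] at hLHSlim
          exact tendsto_nhds_unique hLHSlim hRHSlim
        -- stationarity limit
        have hBpq_div : ∀ m l, Bn (ι m) l p q / h' (χ m)
            = lam j l * (vv (χ m) p) * Wn (ι m) j q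
              + (∑ a ∈ Finset.univ.erase j, lam a l * Wn (ι m) a p * zz (χ m) a)
              + tt (χ m) * ((Wn (ι m))ᵀ * Ss l * Wn (ι m)) p q := by
          intro m l
          have h1 : Bn (ι m) l p q = (∑ r, lam r l * Wn (ι m) r p * Wn (ι m) r q)
              + e (ι m) * ((Wn (ι m))ᵀ * Ss l * Wn (ι m)) p q := by
            rw [hBe, hWDW]
          rw [h1, ← Finset.add_sum_erase Finset.univ
            (fun r => lam r l * Wn (ι m) r p * Wn (ι m) r q) (Finset.mem_univ j),
            add_div, add_div, Finset.sum_div]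
          congr 1
          congr 1
          · rw [hvv]
            simp only [if_neg hpq]
            ring
          · refine Finset.sum_congr rfl fun a ha => ?_
            rw [hzz]
            simp only [if_neg (Finset.mem_erase.mp ha).1]
            ring
          · rw [htt]
            ring
        have hTpq : ∀ l, Tendsto (fun m => ((Wn (ι m))ᵀ * Ss l * Wn (ι m)) p q) atTop
            (nhds (Tl l p q)) :=
          fun l => (entry_tendsto (hTconv l) p q).comp hιmono.tendsto_atTop
        have hBpqlim : ∀ l, Tendsto (fun m => Bn (ι m) l p q / h' (χ m)) atTop
            (nhds (lam j l * v8 p * σ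
              + (∑ a ∈ Finset.univ.erase j, lam a l * P a p * z8 a)
              + t8 * Tl l p q)) := by
          intro l
          have h1 : Tendsto (fun m => lam j l * (vv (χ m) p) * Wn (ι m) j q
              + (∑ a ∈ Finset.univ.erase j, lam a l * Wn (ι m) a p * zz (χ m) a)
              + tt (χ m) * ((Wn (ι m))ᵀ * Ss l * Wn (ι m)) p q) atTop
              (nhds (lam j l * v8 p * (P j q)
                + (∑ a ∈ Finset.univ.erase j, lam a l * P a p * z8 a)
                + t8 * Tl l p q)) := by
            refine Tendsto.add (Tendsto.add ?_ ?_) ?_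
            · exact (tendsto_const_nhds.mul (hvp p)).mul (hWι j q)
            · exact tendsto_finset_sum _ fun a _ =>
                (tendsto_const_nhds.mul (hWι a p)).mul (hzr a)
            · exact ht.mul (hTpq l)
          rw [← hσ] at h1
          exact h1.congr fun m => (hBpq_div m l).symm
        have hBppqq : ∀ l, Tendsto (fun m => Bn (ι m) l p p - Bn (ι m) l q q) atTop
            (nhds (Δv p l - lam j l)) := by
          intro l
          have h1 := (hBconv l p p).comp hιmono.tendsto_atTop
          have h2 := (hBconv l q q).comp hιmono.tendsto_atTop
          have h3 := h1.sub h2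
          rw [show Yl l q q = lam j l from hΔq l] at h3
          exact h3
        have hstatlim : ∑ l, (lam j l * v8 p * σ
            + (∑ a ∈ Finset.univ.erase j, lam a l * P a p * z8 a) + t8 * Tl l p q)
            * (Δv p l - lam j l) = 0 := by
          have hzero : ∀ m, ∑ l, (Bn (ι m) l p q / h' (χ m))
              * (Bn (ι m) l p p - Bn (ι m) l q q) = 0 := by
            intro m
            have h1 := hstat (ι m) p q hpq
            have h2 : ∑ l, (Bn (ι m) l p q / h' (χ m))
                * (Bn (ι m) l p p - Bn (ι m) l q q)
                = (∑ l, Bn (ι m) l p q * (Bn (ι m) l p p - Bn (ι m) l q q))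
                  / h' (χ m) := by
              rw [Finset.sum_div]
              exact Finset.sum_congr rfl fun l _ => by ring
            rw [h2, h1, zero_div]
          have hlim := tendsto_finset_sum Finset.univ
            (fun l (_ : l ∈ Finset.univ) => (hBpqlim l).mul (hBppqq l))
          rw [(funext hzero : (fun m => ∑ l, (Bn (ι m) l p q / h' (χ m))
            * (Bn (ι m) l p p - Bn (ι m) l q q)) = fun _ => (0:ℝ))] at hlim
          exact tendsto_nhds_unique hlim tendsto_const_nhds
        -- substitute the skew identity
        have hmid : ∀ l, ∑ a ∈ Finset.univ.erase j, lam a l * P a p * z8 a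
            = Δv p l * -(σ * v8 p) := by
          intro l
          rw [← hskew, Finset.mul_sum]
          refine Finset.sum_congr rfl fun a _ => ?_
          linear_combination (z8 a) * (hent a p l)
        have hsol : σ * v8 p * γv p = t8 * ∑ l, Tl l p q * (Δv p l - lam j l) := by
          have h1 : ∑ l, (-(σ * v8 p) * (Δv p l - lam j l) + t8 * Tl l p q)
              * (Δv p l - lam j l) = 0 := by
            rw [← hstatlim]
            refine Finset.sum_congr rfl fun l _ => ?_
            rw [hmid l]
            ring
          have h2 : ∑ l, (-(σ * v8 p) * (Δv p l - lam j l) + t8 * Tl l p q)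
              * (Δv p l - lam j l)
              = -(σ * v8 p) * γv p
                + t8 * ∑ l, Tl l p q * (Δv p l - lam j l) := by
            rw [hγv]
            simp only
            rw [Finset.mul_sum, Finset.mul_sum, ← Finset.sum_add_distrib]
            refine Finset.sum_congr rfl fun l _ => ?_
            ring
          rw [h2] at h1
          linarith
        -- the entry formula for Tl
        have hTent : ∀ l, Tl l p q = σ * ∑ a, P a p * Ss l a j := by
          intro l
          show (Pᵀ * Ss l * P) p q = _
          rw [Matrix.mul_assoc, Matrix.mul_apply, Finset.mul_sum]
          refine Finset.sum_congr rfl fun a _ => ?_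
          rw [Matrix.transpose_apply, Matrix.mul_apply]
          rw [Finset.sum_eq_single j (fun b _ hbj => by rw [hcolq b hbj, mul_zero])
            (fun h => absurd (Finset.mem_univ j) h)]
          rw [← hσ]
          ring
        have hper_a : ∀ a, P a p * (∑ l, Ss l a j * (Δv p l - lam j l))
            = P a p * (E a j * γv p) := by
          intro a
          by_cases hPa : P a p = 0
          · rw [hPa, zero_mul, zero_mul]
          · have haΔ : ∀ l, lam a l = Δv p l := by
              intro l
              have h1 := hent a p l
              have h2 : P a p * (lam a l - Δv p l) = 0 := by linear_combination h1
              rcases mul_eq_zero.mp h2 with h | h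
              · exact absurd h hPa
              · linarith
            have haj : a ≠ j := by
              intro h
              rw [h] at hPa
              exact hPa (hProwj p hpq)
            have hSe : ∀ l : Fin L, Ss l j a
                = ∑ a', ∑ b, Ubar a' j * R l a' b * Ubar b a := by
              intro l
              show (Ubarᵀ * R l * Ubar) j a = _
              rw [Matrix.mul_apply]
              rw [(Finset.sum_congr rfl fun b _ => by
                rw [Matrix.mul_apply, Finset.sum_mul]
                exact Finset.sum_congr rfl fun a' _ => by
                  rw [Matrix.transpose_apply] :
                (∑ b, (Ubarᵀ * R l) j b * Ubar b a)
                  = ∑ b, ∑ a', Ubar a' j * R l a' b * Ubar b a)]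
              exact Finset.sum_comm
            have hnum : (∑ l, Ss l a j * (Δv p l - lam j l))
                = ∑ l, (lam a l - lam j l) * Ss l j a := by
              refine Finset.sum_congr rfl fun l _ => ?_
              rw [hSsyme l a j, ← haΔ l]
              ring
            have hden : γv p = ∑ l, (lam a l - lam j l) ^ 2 := by
              rw [hγv]
              simp only
              exact Finset.sum_congr rfl fun l _ => by rw [← haΔ l]
            have hden0 : (∑ l, (lam a l - lam j l) ^ 2) ≠ 0 := hdenom a j haj hj
            congr 1
            rw [hnum, hden, hE a j haj hj]
            rw [(Finset.sum_congr rfl fun l _ => by rw [← hSe l] :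
              (∑ l, (lam a l - lam j l)
                * (∑ a', ∑ b, Ubar a' j * R l a' b * Ubar b a))
              = ∑ l, (lam a l - lam j l) * Ss l j a)]
            field_simp
        have hXp : (∑ l, Tl l p q * (Δv p l - lam j l))
            = σ * (∑ a, P a p * E a j) * γv p := by
          rw [(Finset.sum_congr rfl fun l _ => by rw [hTent l] :
            (∑ l, Tl l p q * (Δv p l - lam j l))
            = ∑ l, (σ * ∑ a, P a p * Ss l a j) * (Δv p l - lam j l))]
          have h1 : ∀ l, (σ * ∑ a, P a p * Ss l a j) * (Δv p l - lam j l)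
              = σ * ∑ a, P a p * (Ss l a j * (Δv p l - lam j l)) := by
            intro l
            rw [Finset.mul_sum, Finset.mul_sum, Finset.sum_mul]
            exact Finset.sum_congr rfl fun a _ => by ring
          rw [Finset.sum_congr rfl fun l _ => h1 l, ← Finset.mul_sum,
            Finset.sum_comm]
          have h2 : ∀ a, ∑ l, P a p * (Ss l a j * (Δv p l - lam j l))
              = P a p * (E a j * γv p) := by
            intro a
            rw [← Finset.mul_sum]
            exact hper_a a
          rw [Finset.sum_congr rfl fun a _ => h2 a]
          rw [(Finset.sum_congr rfl fun a _ => by ring :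
            (∑ a, P a p * (E a j * γv p)) = ∑ a, (P a p * E a j) * γv p),
            ← Finset.sum_mul]
          ring
        -- solve for v8 p
        have hγ0 : γv p ≠ 0 := (hγpos p hpq).ne'
        have h3 : (v8 p - t8 * ∑ a, P a p * E a j) * γv p = 0 := by
          have h1 := hsol
          rw [hXp] at h1
          linear_combination σ * h1
            - (v8 p * γv p - t8 * (∑ a, P a p * E a j) * γv p) * hσ2
        rcases mul_eq_zero.mp h3 with h | h
        · linarith
        · exact absurd h hγ0
      -- conclude
      have hbound : (1 - t8) ^ 2 ≤ t8 ^ 2 * c ^ 2 := by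
        rw [← hE3]
        have hcongr : (∑ p ∈ Finset.univ.erase q, (v8 p) ^ 2)
            = ∑ p ∈ Finset.univ.erase q, t8 ^ 2 * (∑ a, P a p * E a j) ^ 2 :=
          Finset.sum_congr rfl fun p hp => by
            rw [hfinal_p p (Finset.mem_erase.mp hp).1, mul_pow]
        rw [hcongr]
        have h2 : ∑ p ∈ Finset.univ.erase q, t8 ^ 2 * (∑ a, P a p * E a j) ^ 2
            ≤ ∑ p, t8 ^ 2 * (∑ a, P a p * E a j) ^ 2 :=
          Finset.sum_le_sum_of_subset_of_nonneg (Finset.subset_univ _)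
            (fun p _ _ => by positivity)
        refine le_trans h2 (le_of_eq ?_)
        rw [← Finset.mul_sum, iso_sum_sq P hPP' (fun a => E a j)]
        rw [hc, Real.sq_sqrt (Finset.sum_nonneg fun a _ => sq_nonneg _)]
      have ht8nn : 0 ≤ t8 := ht8K.1
      have h1mt : 0 ≤ 1 - t8 :=
        le_trans (mul_nonneg (by linarith [hc0, hδ]) ht8nn) hE4
      have hfin2 : 1 - t8 ≤ t8 * c := by
        have hb1 : (1 - t8) ^ 2 ≤ (t8 * c) ^ 2 := by
          rw [mul_pow]
          exact hbound
        have hb2 := Real.sqrt_le_sqrt hb1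
        rw [Real.sqrt_sq h1mt, Real.sqrt_sq (mul_nonneg ht8nn hc0)] at hb2
        exact hb2
      have hδt : (c + δ / 2) * t8 - c * t8 = (δ / 2) * t8 := by ring
      have hmul : (δ / 2) * t8 ≤ 0 := by linarith [hE4, hfin2, hδt]
      have ht80 : t8 = 0 := by
        rcases lt_or_eq_of_le ht8nn with h | h
        · exfalso
          have : 0 < (δ / 2) * t8 := mul_pos (by linarith) h
          linarith
        · exact h.symm
      rw [ht80] at hfin2
      simp at hfin2
      linarith

    -- final contradiction
    have hev2 : ∀ᶠ n in atTop, (c + δ / 2) * Real.sqrt (1 + m2 n) ≤ c + δ := by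
      have h1 : Tendsto (fun n => (c + δ / 2) * Real.sqrt (1 + m2 n)) atTop
          (nhds (c + δ / 2)) := by
        have h2 : Tendsto (fun n => Real.sqrt (1 + m2 n)) atTop (nhds 1) := by
          have h4 : Tendsto (fun n => 1 + m2 n) atTop (nhds 1) := by
            have := (tendsto_const_nhds (x := (1:ℝ))).add hm2lim
            simpa using this
          have h3 := (Real.continuous_sqrt.tendsto 1).comp h4
          simpa [Function.comp_def] using h3
        have := (tendsto_const_nhds (x := c + δ / 2)).mul h2
        simpa using this
      exact h1.eventually_le_const (by linarith)
    have hfin : ∀ᶠ n in atTop,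
        Real.sqrt (m2 n + (1 - σ * Wn n j q) ^ 2) ≤ (c + δ) * e n := by
      filter_upwards [hkey, hev1, hev2] with n h1 h2 h3
      have ha : (1 - σ * Wn n j q) * (1 + σ * Wn n j q) = m2 n := by
        simp only [hm2]
        linear_combination (-(Wn n j q) ^ 2) * hσ2
      have hc1 : σ * Wn n j q ≤ 1 := by nlinarith [ha, hm2nn n, h2]
      have hb : 1 - σ * Wn n j q ≤ m2 n := by nlinarith [ha, h2]
      have hsq : m2 n + (1 - σ * Wn n j q) ^ 2 ≤ m2 n * (1 + m2 n) := by
        nlinarith [hb, hc1]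
      have h4 : Real.sqrt (m2 n + (1 - σ * Wn n j q) ^ 2)
          ≤ Real.sqrt (m2 n) * Real.sqrt (1 + m2 n) := by
        rw [← Real.sqrt_mul (hm2nn n)]
        exact Real.sqrt_le_sqrt hsq
      calc Real.sqrt (m2 n + (1 - σ * Wn n j q) ^ 2)
          ≤ Real.sqrt (m2 n) * Real.sqrt (1 + m2 n) := h4
        _ ≤ ((c + δ / 2) * e n) * Real.sqrt (1 + m2 n) :=
            mul_le_mul_of_nonneg_right h1 (Real.sqrt_nonneg _)
        _ = e n * ((c + δ / 2) * Real.sqrt (1 + m2 n)) := by ring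
        _ ≤ e n * (c + δ) := mul_le_mul_of_nonneg_left h3 (le_of_lt (hepos n))
        _ = (c + δ) * e n := by ring
    obtain ⟨n, hn⟩ := hfin.exists
    linarith [hlow n, hn]
  -- conclude via limsup = sInf
  rw [Filter.limsup_eq]
  have hBdd : BddBelow {a : ℝ | ∀ᶠ ε in nhdsWithin (0:ℝ) (Set.Ioi 0), f ε ≤ a} := by
    refine ⟨0, fun a ha => ?_⟩
    have hev : ∀ᶠ ε in nhdsWithin (0:ℝ) (Set.Ioi 0), 0 ≤ f ε ∧ f ε ≤ a := by
      filter_upwards [self_mem_nhdsWithin, ha] with ε hε hfa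
      exact ⟨hfnn ε hε, hfa⟩
    obtain ⟨ε, h1, h2⟩ := hev.exists
    linarith
  refine le_of_forall_pos_le_add fun δ hδ => ?_
  exact csInf_le hBdd (key δ hδ)
end

section
/- Let M_1,…,M_L ∈ ℝ^{d×d} and define F(V) = Σ_{l=1}^L Σ_{i≠j} (Vᵀ M_l V)_{ij}² for V ∈ O(d). For V ∈ O(d) define the matrix S(V) = Σ_{l=1}^L Σ_{i≠j} (e_iᵀ Vᵀ M_l V e_j) · (e_i e_jᵀ Vᵀ M_lᵀ V − Vᵀ M_lᵀ V e_i e_jᵀ), where e_1,…,e_d are the standard basis vectors. If V ∈ O(d) is a local minimizer of F restricted to the orthogonal group O(d), then S(V) = S(V)ᵀ. -/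
open Matrix

section CardosoAux

variable {d : ℕ}

lemma stdBT (i j : Fin d) (c : ℝ) : (Matrix.single i j c)ᵀ = Matrix.single j i c := by
  ext p q
  simp [Matrix.single, transpose_apply, and_comm]

lemma if0 (p : Prop) [Decidable p] (x : ℝ) :
    (if p then (0:ℝ) else x) = x - if p then x else 0 := by split <;> simp

lemma sum_ite_const {α : Type*} [Fintype α] (c : Prop) [Decidable c] (f : α → ℝ) :
    ∑ j, (if c then f j else 0) = if c then ∑ j, f j else 0 := by split <;> simp

lemma mite (c : Prop) [Decidable c] (X : Matrix (Fin d) (Fin d) ℝ) (x y : Fin d) :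
    (if c then (0 : Matrix (Fin d) (Fin d) ℝ) else X) x y
      = if c then 0 else X x y := by split <;> simp

lemma EmulL (B : Matrix (Fin d) (Fin d) ℝ) (i j x y : Fin d) :
    (Matrix.single i j (1:ℝ) * B) x y = if x = i then B j y else 0 := by
  by_cases h : x = i
  · subst h; simp
  · simp [h]

lemma EmulR (B : Matrix (Fin d) (Fin d) ℝ) (i j x y : Fin d) :
    (B * Matrix.single i j (1:ℝ)) x y = if y = j then B x i else 0 := by
  by_cases h : y = j
  · subst h; simp
  · simp [h]

noncomputable def givens (a b : Fin d) (t : ℝ) : Matrix (Fin d) (Fin d) ℝ :=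
  1 + (Real.cos t - 1) • (Matrix.single a a (1:ℝ) + Matrix.single b b 1)
    + Real.sin t • (Matrix.single a b (1:ℝ) - Matrix.single b a 1)

lemma givens_zero (a b : Fin d) : givens a b 0 = 1 := by
  simp [givens]

lemma givens_orth (a b : Fin d) (hab : a ≠ b) (t : ℝ) :
    (givens a b t)ᵀ * givens a b t = 1 := by
  have hab' : b ≠ a := hab.symm
  set c := Real.cos t with hc
  set s := Real.sin t with hs
  set P : Matrix (Fin d) (Fin d) ℝ := Matrix.single a a 1 + Matrix.single b b 1 with hP
  set Q : Matrix (Fin d) (Fin d) ℝ := Matrix.single a b 1 - Matrix.single b a 1 with hQ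
  have hPt : Pᵀ = P := by rw [hP, transpose_add, stdBT, stdBT]
  have hQt : Qᵀ = -Q := by rw [hQ, transpose_sub, stdBT, stdBT, neg_sub]
  have hPP : P * P = P := by
    rw [hP]
    simp [add_mul, mul_add, single_mul_single_same, single_mul_single_of_ne, hab, hab']
  have hPQ : P * Q = Q := by
    rw [hP, hQ]
    simp [add_mul, mul_add, mul_sub, sub_mul, single_mul_single_same,
      single_mul_single_of_ne, hab, hab']
  have hQP : Q * P = Q := by
    rw [hP, hQ]
    simp [add_mul, mul_add, mul_sub, sub_mul, single_mul_single_same,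
      single_mul_single_of_ne, hab, hab']
    abel
  have hQQ : Q * Q = -P := by
    rw [hP, hQ]
    simp [mul_sub, sub_mul, single_mul_single_same, single_mul_single_of_ne, hab, hab']
    abel
  have hR : givens a b t = 1 + (c - 1) • P + s • Q := rfl
  rw [hR]
  have hRt : (1 + (c - 1) • P + s • Q)ᵀ = 1 + (c - 1) • P - s • Q := by
    rw [transpose_add, transpose_add, transpose_one, transpose_smul, transpose_smul,
      hPt, hQt, smul_neg]
    abel
  rw [hRt]
  have expand : (1 + (c - 1) • P - s • Q) * (1 + (c - 1) • P + s • Q)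
      = 1 + ((c-1) + (c-1) + (c-1)*(c-1) + s*s) • P := by
    simp only [add_mul, sub_mul, mul_add, one_mul, mul_one, smul_mul_assoc, mul_smul_comm,
      hPP, hPQ, hQP, hQQ, smul_smul, smul_neg]
    module
  rw [expand]
  have : (c-1) + (c-1) + (c-1)*(c-1) + s*s = 0 := by
    have h := Real.sin_sq_add_cos_sq t
    rw [← hs, ← hc] at h
    nlinarith [h]
  rw [this]
  simp

lemma givens_fun_eq (a b p q : Fin d) : (fun t => givens a b t p q) = (fun t : ℝ =>
    (1 : Matrix (Fin d) (Fin d) ℝ) p q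
      + (Real.cos t - 1) * ((Matrix.single a a (1:ℝ) + Matrix.single b b 1 : Matrix (Fin d) (Fin d) ℝ) p q)
      + Real.sin t * ((Matrix.single a b (1:ℝ) - Matrix.single b a 1 : Matrix (Fin d) (Fin d) ℝ) p q)) := by
  funext t
  simp only [givens, Matrix.add_apply, Matrix.smul_apply, smul_eq_mul]

lemma givens_entry_hasDeriv (a b p q : Fin d) :
    HasDerivAt (fun t => givens a b t p q)
      ((Matrix.single a b (1:ℝ) - Matrix.single b a 1 : Matrix (Fin d) (Fin d) ℝ) p q) 0 := by
  have h1 : HasDerivAt (fun t : ℝ =>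
      (1 : Matrix (Fin d) (Fin d) ℝ) p q
        + (Real.cos t - 1) * ((Matrix.single a a (1:ℝ) + Matrix.single b b 1 : Matrix (Fin d) (Fin d) ℝ) p q)
        + Real.sin t * ((Matrix.single a b (1:ℝ) - Matrix.single b a 1 : Matrix (Fin d) (Fin d) ℝ) p q))
      ((-Real.sin 0) * ((Matrix.single a a (1:ℝ) + Matrix.single b b 1 : Matrix (Fin d) (Fin d) ℝ) p q)
        + Real.cos 0 * ((Matrix.single a b (1:ℝ) - Matrix.single b a 1 : Matrix (Fin d) (Fin d) ℝ) p q)) 0 :=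
    ((((Real.hasDerivAt_cos 0).sub_const 1).mul_const _).const_add _).add
      ((Real.hasDerivAt_sin 0).mul_const _)
  rw [givens_fun_eq]
  simpa using h1

lemma givens_cont (a b p q : Fin d) : Continuous fun t => givens a b t p q := by
  rw [givens_fun_eq]
  fun_prop

lemma entry_hasDeriv (N : Matrix (Fin d) (Fin d) ℝ) (a b i j : Fin d) :
    HasDerivAt (fun t => ((givens a b t)ᵀ * N * givens a b t) i j)
      (((Matrix.single a b (1:ℝ) - Matrix.single b a 1 : Matrix (Fin d) (Fin d) ℝ)ᵀ * N
        + N * (Matrix.single a b (1:ℝ) - Matrix.single b a 1)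
        : Matrix (Fin d) (Fin d) ℝ) i j) 0 := by
  set Q : Matrix (Fin d) (Fin d) ℝ := Matrix.single a b 1 - Matrix.single b a 1 with hQ
  have hfun : (fun t => ((givens a b t)ᵀ * N * givens a b t) i j)
      = fun t => ∑ q, (∑ p, givens a b t p i * N p q) * givens a b t q j := by
    funext t
    simp [Matrix.mul_apply, Matrix.transpose_apply]
  rw [hfun]
  have H : HasDerivAt (fun t => ∑ q, (∑ p, givens a b t p i * N p q) * givens a b t q j)
      (∑ q, ((∑ p, Q p i * N p q) * givens a b 0 q j
        + (∑ p, givens a b 0 p i * N p q) * Q q j)) 0 :=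
    HasDerivAt.fun_sum (fun q _ =>
      (HasDerivAt.fun_sum (fun p _ => (givens_entry_hasDeriv a b p i).mul_const (N p q))).mul
        (givens_entry_hasDeriv a b q j))
  convert H using 1
  simp only [givens_zero, Matrix.one_apply, Matrix.add_apply, Matrix.mul_apply,
    Matrix.transpose_apply, mul_ite, mul_one, mul_zero, ite_mul, one_mul, zero_mul,
    Finset.sum_ite_eq, Finset.sum_ite_eq', Finset.mem_univ, if_true]
  rw [Finset.sum_add_distrib]
  simp [Finset.sum_ite_eq', Matrix.mul_apply, Matrix.transpose_apply, Matrix.add_apply]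

lemma qn_entry (N : Matrix (Fin d) (Fin d) ℝ) (a b i j : Fin d) (hab : a ≠ b) :
    (((Matrix.single a b (1:ℝ) - Matrix.single b a 1 : Matrix (Fin d) (Fin d) ℝ)ᵀ * N
      + N * (Matrix.single a b (1:ℝ) - Matrix.single b a 1)
      : Matrix (Fin d) (Fin d) ℝ) i j)
    = ((if i = b then N a j else 0) - (if i = a then N b j else 0))
      + ((if j = b then N i a else 0) - (if j = a then N i b else 0)) := by
  have hab' : b ≠ a := hab.symm
  simp [Matrix.mul_apply, Matrix.add_apply, Matrix.sub_apply, Matrix.transpose_apply,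
    Matrix.single, ite_and, sub_mul, mul_sub, ite_mul, mul_ite, mul_zero, zero_mul,
    mul_one, one_mul, Finset.sum_sub_distrib, Finset.sum_ite_eq, Finset.sum_ite_eq',
    eq_comm]

lemma key_sum (N : Matrix (Fin d) (Fin d) ℝ) (a b : Fin d) (hab : a ≠ b) :
    (∑ i, ∑ j, if i = j then (0:ℝ) else 2 * N i j *
      (((Matrix.single a b (1:ℝ) - Matrix.single b a 1 : Matrix (Fin d) (Fin d) ℝ)ᵀ * N
        + N * (Matrix.single a b (1:ℝ) - Matrix.single b a 1)
        : Matrix (Fin d) (Fin d) ℝ) i j))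
    = 2 * ((N a a - N b b) * (N a b + N b a)) := by
  have hab' : b ≠ a := hab.symm
  have h1 : ∀ i j : Fin d, (if i = j then (0:ℝ) else 2 * N i j *
      (((Matrix.single a b (1:ℝ) - Matrix.single b a 1 : Matrix (Fin d) (Fin d) ℝ)ᵀ * N
        + N * (Matrix.single a b (1:ℝ) - Matrix.single b a 1)
        : Matrix (Fin d) (Fin d) ℝ) i j))
      = (2 * N i j * (((if i = b then N a j else 0) - (if i = a then N b j else 0))
          + ((if j = b then N i a else 0) - (if j = a then N i b else 0))))
        - (if i = j then (2 * N i j * (((if i = b then N a j else 0) - (if i = a then N b j else 0))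
          + ((if j = b then N i a else 0) - (if j = a then N i b else 0)))) else 0) := by
    intro i j
    rw [qn_entry N a b i j hab, if0]
  simp only [h1, Finset.sum_sub_distrib]
  have h2 : ∀ i j : Fin d, 2 * N i j * (((if i = b then N a j else 0) - (if i = a then N b j else 0))
          + ((if j = b then N i a else 0) - (if j = a then N i b else 0)))
      = ((if i = b then 2 * N i j * N a j else 0) - (if i = a then 2 * N i j * N b j else 0))
        + ((if j = b then 2 * N i j * N i a else 0) - (if j = a then 2 * N i j * N i b else 0)) := by
    intro i j; split_ifs <;> ring
  simp only [h2, Finset.sum_add_distrib, Finset.sum_sub_distrib, sum_ite_const,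
    Finset.sum_ite_eq, Finset.sum_ite_eq', Finset.mem_univ, if_true]
  ring_nf
  have hc1 : ∑ x : Fin d, N b x * N a x * 2 = ∑ x : Fin d, N a x * N b x * 2 :=
    Finset.sum_congr rfl (fun x _ => by ring)
  have hc2 : ∑ x : Fin d, N x b * N x a * 2 = ∑ x : Fin d, N x a * N x b * 2 :=
    Finset.sum_congr rfl (fun x _ => by ring)
  rw [hc1, hc2]
  ring

lemma key_sum2 (A : Matrix (Fin d) (Fin d) ℝ) (a b : Fin d) (hab : a ≠ b) :
    (∑ i, ∑ j, if i = j then (0:ℝ) else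
        A j i * ((if a = i then A j b else 0) - (if b = j then A a i else 0)))
      - (∑ i, ∑ j, if i = j then (0:ℝ) else
        A j i * ((if b = i then A j a else 0) - (if a = j then A b i else 0)))
    = (A b b - A a a) * (A a b + A b a) := by
  have hab' : b ≠ a := hab.symm
  have h1 : ∀ (x y : Fin d) (i j : Fin d), (if i = j then (0:ℝ) else
      A j i * ((if x = i then A j y else 0) - (if y = j then A x i else 0)))
      = ((if x = i then A j i * A j y else 0) - (if y = j then A j i * A x i else 0))
        - (if i = j then ((if x = i then A j i * A j y else 0)
            - (if y = j then A j i * A x i else 0)) else 0) := by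
    intro x y i j
    rw [if0]
    congr 1 <;> [skip; split] <;> [skip; skip; rfl] <;> split_ifs <;> ring
  simp only [h1, Finset.sum_sub_distrib, sum_ite_const,
    Finset.sum_ite_eq, Finset.sum_ite_eq', Finset.mem_univ, if_true]
  ring_nf
  have hc1 : ∑ j : Fin d, A j b * A j a = ∑ x : Fin d, A x a * A x b :=
    Finset.sum_congr rfl (fun x _ => by ring)
  have hc2 : ∑ x : Fin d, A a x * A b x = ∑ x : Fin d, A b x * A a x :=
    Finset.sum_congr rfl (fun x _ => by ring)
  rw [hc1, hc2]
  ring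

lemma S_entry (B C : Matrix (Fin d) (Fin d) ℝ) (hBC : ∀ i j, B i j = C j i) (x y : Fin d) :
    (∑ i, ∑ j, if i = j then (0 : Matrix (Fin d) (Fin d) ℝ) else
        (B i j) • (Matrix.single i j (1 : ℝ) * C - C * Matrix.single i j (1 : ℝ))) x y
    = ∑ i, ∑ j, if i = j then (0:ℝ) else
        C j i * ((if x = i then C j y else 0) - (if y = j then C x i else 0)) := by
  rw [Matrix.sum_apply]
  refine Finset.sum_congr rfl fun i _ => ?_
  rw [Matrix.sum_apply]
  refine Finset.sum_congr rfl fun j _ => ?_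
  rw [mite]
  by_cases h : i = j
  · simp [h]
  · simp only [if_neg h, Matrix.smul_apply, Matrix.sub_apply, smul_eq_mul, EmulL, EmulR, hBC]

end CardosoAux

/-- Cardoso's first-order optimality criterion: at a local minimizer
`V` of the joint diagonalization objective on `O(d)`, the matrix `S(V)` is
symmetric. -/
theorem stmt_6 {d L : ℕ} (M : Fin L → Matrix (Fin d) (Fin d) ℝ)
    (V : Matrix (Fin d) (Fin d) ℝ) (hV : Vᵀ * V = 1)
    (hmin : ∃ η > (0 : ℝ), ∀ W : Matrix (Fin d) (Fin d) ℝ, Wᵀ * W = 1 →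
      Real.sqrt (∑ a, ∑ b, (W a b - V a b) ^ 2) < η →
        (∑ l, ∑ i, ∑ j, if i = j then 0 else ((Vᵀ * M l * V) i j) ^ 2) ≤
        (∑ l, ∑ i, ∑ j, if i = j then 0 else ((Wᵀ * M l * W) i j) ^ 2)) :
    (∑ l, ∑ i, ∑ j, if i = j then (0 : Matrix (Fin d) (Fin d) ℝ) else
        ((Vᵀ * M l * V) i j) •
          (Matrix.single i j (1 : ℝ) * (Vᵀ * (M l)ᵀ * V) -
            (Vᵀ * (M l)ᵀ * V) * Matrix.single i j (1 : ℝ))) =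
    (∑ l, ∑ i, ∑ j, if i = j then (0 : Matrix (Fin d) (Fin d) ℝ) else
        ((Vᵀ * M l * V) i j) •
          (Matrix.single i j (1 : ℝ) * (Vᵀ * (M l)ᵀ * V) -
            (Vᵀ * (M l)ᵀ * V) * Matrix.single i j (1 : ℝ)))ᵀ := by
  classical
  obtain ⟨η, hη, hm⟩ := hmin
  have hNA : ∀ (l : Fin L) (i j : Fin d), (Vᵀ * M l * V) i j = (Vᵀ * (M l)ᵀ * V) j i := by
    intro l i j
    have : Vᵀ * (M l)ᵀ * V = (Vᵀ * M l * V)ᵀ := by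
      rw [transpose_mul, transpose_mul, transpose_transpose]
      rw [Matrix.mul_assoc]
    rw [this, transpose_apply]
  ext a b
  rw [Matrix.transpose_apply]
  by_cases hab : a = b
  · subst hab; rfl
  -- entry reduction
  rw [Matrix.sum_apply, Matrix.sum_apply]
  have hent : ∀ x y : Fin d, ∀ l : Fin L,
      (∑ i, ∑ j, if i = j then (0 : Matrix (Fin d) (Fin d) ℝ) else
        ((Vᵀ * M l * V) i j) •
          (Matrix.single i j (1 : ℝ) * (Vᵀ * (M l)ᵀ * V) -
            (Vᵀ * (M l)ᵀ * V) * Matrix.single i j (1 : ℝ))) x y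
      = ∑ i, ∑ j, if i = j then (0:ℝ) else
          (Vᵀ * (M l)ᵀ * V) j i * ((if x = i then (Vᵀ * (M l)ᵀ * V) j y else 0)
            - (if y = j then (Vᵀ * (M l)ᵀ * V) x i else 0)) := by
    intro x y l
    exact S_entry (Vᵀ * M l * V) (Vᵀ * (M l)ᵀ * V) (hNA l) x y
  rw [Finset.sum_congr rfl (fun l _ => hent a b l),
    Finset.sum_congr rfl (fun l _ => hent b a l)]
  -- derivative setup
  rw [← sub_eq_zero, ← Finset.sum_sub_distrib]
  rw [Finset.sum_congr rfl (fun l _ => key_sum2 (Vᵀ * (M l)ᵀ * V) a b hab)]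
  -- griddle: show the sum vanishes using the local minimum
  set g : ℝ → ℝ := fun t => ∑ l, ∑ i, ∑ j, if i = j then (0:ℝ) else
    (((givens a b t)ᵀ * (Vᵀ * M l * V) * givens a b t) i j)^2 with hg
  have hgD : HasDerivAt g (∑ l, ∑ i, ∑ j, if i = j then (0:ℝ) else
      2 * ((Vᵀ * M l * V) i j) *
        (((Matrix.single a b (1:ℝ) - Matrix.single b a 1 : Matrix (Fin d) (Fin d) ℝ)ᵀ
            * (Vᵀ * M l * V)
          + (Vᵀ * M l * V) * (Matrix.single a b (1:ℝ) - Matrix.single b a 1)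
          : Matrix (Fin d) (Fin d) ℝ) i j)) 0 := by
    rw [hg]
    apply HasDerivAt.fun_sum; intro l _
    apply HasDerivAt.fun_sum; intro i _
    apply HasDerivAt.fun_sum; intro j _
    by_cases h : i = j
    · simp only [if_pos h]
      exact hasDerivAt_const _ _
    · simp only [if_neg h]
      have H := (entry_hasDeriv (Vᵀ * M l * V) a b i j).fun_pow 2
      convert H using 1
      · rfl
      · simp [givens_zero]
  have horth : ∀ t, (V * givens a b t)ᵀ * (V * givens a b t) = 1 := by
    intro t
    simp only [transpose_mul, Matrix.mul_assoc]
    rw [← Matrix.mul_assoc Vᵀ V, hV, Matrix.one_mul]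
    exact givens_orth a b hab t
  have hconj : ∀ (l : Fin L) (t : ℝ), (V * givens a b t)ᵀ * M l * (V * givens a b t)
      = (givens a b t)ᵀ * (Vᵀ * M l * V) * givens a b t := by
    intro l t
    simp only [transpose_mul, Matrix.mul_assoc]
  have hφ : Filter.Tendsto
      (fun t => Real.sqrt (∑ p, ∑ q, ((V * givens a b t) p q - V p q)^2))
      (nhds 0) (nhds 0) := by
    have hcont : Continuous
        (fun t => Real.sqrt (∑ p, ∑ q, ((V * givens a b t) p q - V p q)^2)) := by
      apply Real.continuous_sqrt.comp
      apply continuous_finset_sum; intro p _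
      apply continuous_finset_sum; intro q _
      have hmul : Continuous fun t => (V * givens a b t) p q := by
        simp only [Matrix.mul_apply]
        exact continuous_finset_sum _ (fun k _ => continuous_const.mul (givens_cont a b k q))
      exact (hmul.sub continuous_const).pow 2
    have h0 : Real.sqrt (∑ p, ∑ q, ((V * givens a b 0) p q - V p q)^2) = 0 := by
      simp [givens_zero]
    have := hcont.continuousAt (x := (0:ℝ))
    rw [ContinuousAt, h0] at this
    exact this
  have hev : ∀ᶠ t in nhds (0:ℝ),
      Real.sqrt (∑ p, ∑ q, ((V * givens a b t) p q - V p q)^2) < η :=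
    hφ.eventually_lt_const hη
  have hloc : IsLocalMin g 0 := by
    have : ∀ᶠ t in nhds (0:ℝ), g 0 ≤ g t := by
      filter_upwards [hev] with t ht
      have h1 := hm (V * givens a b t) (horth t) ht
      have hg0 : g 0 = ∑ l, ∑ i, ∑ j, if i = j then (0:ℝ) else ((Vᵀ * M l * V) i j)^2 := by
        simp [hg, givens_zero]
      have hgt : g t = ∑ l, ∑ i, ∑ j, if i = j then (0:ℝ) else
          (((V * givens a b t)ᵀ * M l * (V * givens a b t)) i j)^2 := by
        simp only [hg, hconj]
      rw [hg0, hgt]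
      exact h1
    exact this
  have hD : (∑ l, ∑ i, ∑ j, if i = j then (0:ℝ) else
      2 * ((Vᵀ * M l * V) i j) *
        (((Matrix.single a b (1:ℝ) - Matrix.single b a 1 : Matrix (Fin d) (Fin d) ℝ)ᵀ
            * (Vᵀ * M l * V)
          + (Vᵀ * M l * V) * (Matrix.single a b (1:ℝ) - Matrix.single b a 1)
          : Matrix (Fin d) (Fin d) ℝ) i j)) = 0 :=
    hloc.hasDerivAt_eq_zero hgD
  rw [Finset.sum_congr rfl (fun l _ => key_sum (Vᵀ * M l * V) a b hab)] at hD
  -- translate hD into the goal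
  have htr : ∀ l : Fin L,
      ((Vᵀ * (M l)ᵀ * V) b b - (Vᵀ * (M l)ᵀ * V) a a)
        * ((Vᵀ * (M l)ᵀ * V) a b + (Vᵀ * (M l)ᵀ * V) b a)
      = -(1/2) * (2 * (((Vᵀ * M l * V) a a - (Vᵀ * M l * V) b b)
          * ((Vᵀ * M l * V) a b + (Vᵀ * M l * V) b a))) := by
    intro l
    rw [hNA l a a, hNA l b b, hNA l a b, hNA l b a]
    ring
  rw [Finset.sum_congr rfl (fun l _ => htr l), ← Finset.mul_sum, hD, mul_zero]
end
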